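/- arXiv:1006.1443 — 5 statements merged into one kernel-verified Lean document; each statement's English description precedes it below -/
import Mathlib

section
/- Let 0 ≤ α ≤ 1/2, let w_1,…,w_n be arbitrary nonnegative reals, and let X_1,…,X_n be independent random variables each equal to −1 with probability α and 1 otherwise. Set X = Σ_{i=1}^n w_i X_i. Then P(X < 0) ≤ 1/2, and for every δ ≥ 0, P(X > δ) ≥ P(X < −δ). Symmetrically, if all w_i ≤ 0, then P(X > 0) ≤ 1/2 and P(X < −δ) ≥ P(X > δ) for every δ ≥ 0. -/
open MeasureTheory ProbabilityTheory Finset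

namespace Stmt5Aux

noncomputable def sgn (b : Bool) : ℝ := if b then 1 else -1

lemma sgn_true : sgn true = 1 := rfl
lemma sgn_false : sgn false = -1 := rfl
lemma sgn_not (b : Bool) : sgn (!b) = -sgn b := by cases b <;> simp [sgn]

-- the combinatorial core
lemma comb {k : ℕ} (a r : ENNReal) (w : Fin k → ℝ) (hw : ∀ i, 0 ≤ w i) (δ : ℝ) (hδ : 0 ≤ δ) :
    ∑ s ∈ Finset.univ.filter (fun s : Fin k → Bool => (∑ i, w i * sgn (s i)) < -δ),
        ∏ i, (a + if s i then r else 0)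
    ≤ ∑ s ∈ Finset.univ.filter (fun s : Fin k → Bool => δ < ∑ i, w i * sgn (s i)),
        ∏ i, (a + if s i then r else 0) := by
  classical
  set A := Finset.univ.filter (fun s : Fin k → Bool => (∑ i, w i * sgn (s i)) < -δ) with hA
  set B := Finset.univ.filter (fun s : Fin k → Bool => δ < ∑ i, w i * sgn (s i)) with hB
  have hexp : ∀ s : Fin k → Bool, (∏ i, (a + if s i then r else 0)) =
      ∑ t ∈ (Finset.univ : Finset (Fin k)).powerset,
        (∏ _i ∈ t, a) * ∏ i ∈ Finset.univ \ t, (if s i then r else 0) := by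
    intro s
    exact Finset.prod_add (fun _ => a) (fun i => if s i then r else 0) Finset.univ
  simp only [hexp]
  rw [Finset.sum_comm, Finset.sum_comm (s := B)]
  apply Finset.sum_le_sum
  intro t _
  set φ : (Fin k → Bool) → (Fin k → Bool) := fun s i => if i ∈ t then !s i else s i with hφ
  have hinv : ∀ s, φ (φ s) = s := by
    intro s; funext i; simp only [hφ]; by_cases h : i ∈ t <;> simp [h]
  have hinj : Function.Injective φ := Function.Involutive.injective hinv
  set F : (Fin k → Bool) → ENNReal :=
    fun s => (∏ _i ∈ t, a) * ∏ i ∈ Finset.univ \ t, (if s i then r else 0) with hF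
  set P : (Fin k → Bool) → Prop := fun s => ∀ i ∈ Finset.univ \ t, s i = true with hP
  have hFphi : ∀ s, F (φ s) = F s := by
    intro s
    simp only [hF]
    congr 1
    apply Finset.prod_congr rfl
    intro i hi
    have : i ∉ t := (Finset.mem_sdiff.1 hi).2
    simp [hφ, this]
  have hF0 : ∀ s, ¬ P s → F s = 0 := by
    intro s hs
    simp only [hP, not_forall] at hs
    obtain ⟨i, hi, hsi⟩ := hs
    have : (∏ i ∈ Finset.univ \ t, (if s i then r else 0)) = 0 :=
      Finset.prod_eq_zero hi (by simp [hsi])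
    simp [hF, this]
  have hmap : ∀ s ∈ A.filter P, φ s ∈ B := by
    intro s hs
    rw [Finset.mem_filter] at hs
    obtain ⟨hsA, hsP⟩ := hs
    rw [hA, Finset.mem_filter] at hsA
    have hS : (∑ i, w i * sgn (s i)) < -δ := hsA.2
    have hsplit : ∀ u : Fin k → Bool,
        (∑ i ∈ Finset.univ \ t, w i * sgn (u i)) + (∑ i ∈ t, w i * sgn (u i))
          = ∑ i, w i * sgn (u i) :=
      fun u => Finset.sum_sdiff (Finset.subset_univ t)
    have hc : (∑ i ∈ Finset.univ \ t, w i * sgn (s i)) = ∑ i ∈ Finset.univ \ t, w i := by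
      apply Finset.sum_congr rfl
      intro i hi
      rw [hsP i hi, sgn_true, mul_one]
    have hc0 : 0 ≤ ∑ i ∈ Finset.univ \ t, w i :=
      Finset.sum_nonneg fun i _ => hw i
    have hφsum : (∑ i, w i * sgn (φ s i)) =
        (∑ i ∈ Finset.univ \ t, w i * sgn (s i)) - (∑ i ∈ t, w i * sgn (s i)) := by
      rw [← hsplit (φ s)]
      have h1 : (∑ i ∈ Finset.univ \ t, w i * sgn (φ s i))
          = ∑ i ∈ Finset.univ \ t, w i * sgn (s i) := by
        apply Finset.sum_congr rfl
        intro i hi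
        have : i ∉ t := (Finset.mem_sdiff.1 hi).2
        simp [hφ, this]
      have h2 : (∑ i ∈ t, w i * sgn (φ s i)) = -∑ i ∈ t, w i * sgn (s i) := by
        rw [← Finset.sum_neg_distrib]
        apply Finset.sum_congr rfl
        intro i hi
        simp [hφ, hi, sgn_not]
      rw [h1, h2]
      ring
    rw [hB, Finset.mem_filter]
    refine ⟨Finset.mem_univ _, ?_⟩
    rw [hφsum]
    rw [← hsplit s] at hS
    rw [hc] at hS hφsum ⊢
    linarith
  calc ∑ s ∈ A, F s = ∑ s ∈ A.filter P, F s := by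
        symm
        apply Finset.sum_filter_of_ne
        intro s _ hFs
        by_contra h
        exact hFs (hF0 s h)
    _ = ∑ s ∈ (A.filter P).image φ, F s := by
        rw [Finset.sum_image (fun x _ y _ h => hinj h)]
        exact (Finset.sum_congr rfl fun s _ => (hFphi s).symm)
    _ ≤ ∑ s ∈ B, F s := by
        apply Finset.sum_le_sum_of_subset
        intro s hs
        obtain ⟨u, hu, rfl⟩ := Finset.mem_image.1 hs
        exact hmap u hu



lemma measure_eq_sum
    {k : ℕ} {Ω : Type} [MeasurableSpace Ω] (μ : Measure Ω) [IsProbabilityMeasure μ]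
    (α : ℝ) (hα0 : 0 ≤ α)
    (X : Fin k → Ω → ℝ) (hmeas : ∀ i, Measurable (X i))
    (hval : ∀ i ω, X i ω = -1 ∨ X i ω = 1)
    (hprob : ∀ i, μ {ω | X i ω = -1} = ENNReal.ofReal α)
    (hindep : iIndepFun X μ)
    (C : ℝ → Prop) [DecidablePred C] (w : Fin k → ℝ) :
    μ {ω | C (∑ i, w i * X i ω)} =
      ∑ s ∈ Finset.univ.filter (fun s : Fin k → Bool => C (∑ i, w i * sgn (s i))),
        ∏ i, ENNReal.ofReal (if s i then 1 - α else α) := by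
  classical
  set E : (Fin k → Bool) → Set Ω := fun s => ⋂ i, X i ⁻¹' {sgn (s i)} with hE
  have hEmeas : ∀ s, MeasurableSet (E s) :=
    fun s => MeasurableSet.iInter fun i => (hmeas i) (measurableSet_singleton _)
  -- single-coordinate probabilities
  have hone : ∀ i, μ (X i ⁻¹' {(1 : ℝ)}) = ENNReal.ofReal (1 - α) := by
    intro i
    have hcompl : X i ⁻¹' {(1 : ℝ)} = {ω | X i ω = -1}ᶜ := by
      ext ω
      simp only [Set.mem_preimage, Set.mem_singleton_iff, Set.mem_compl_iff, Set.mem_setOf_eq]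
      constructor
      · intro h h'; rw [h'] at h; norm_num at h
      · intro h; rcases hval i ω with h' | h'
        · exact absurd h' h
        · exact h'
    have hm : MeasurableSet {ω | X i ω = -1} := (hmeas i) (measurableSet_singleton (-1 : ℝ))
    rw [hcompl, measure_compl hm (measure_ne_top μ _), measure_univ, hprob i,
      ← ENNReal.ofReal_one, ← ENNReal.ofReal_sub _ hα0]
  have hcoord : ∀ (i : Fin k) (b : Bool),
      μ (X i ⁻¹' {sgn b}) = ENNReal.ofReal (if b then 1 - α else α) := by
    intro i b
    cases b
    · rw [sgn_false]; exact hprob i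
    · simpa [sgn] using hone i
  -- product formula from independence
  have hEprod : ∀ s, μ (E s) = ∏ i, ENNReal.ofReal (if s i then 1 - α else α) := by
    intro s
    rw [hE]
    rw [hindep.meas_iInter fun i => ⟨{sgn (s i)}, measurableSet_singleton _, rfl⟩]
    exact Finset.prod_congr rfl fun i _ => hcoord i (s i)
  -- the partition
  have hset : {ω | C (∑ i, w i * X i ω)} =
      ⋃ s ∈ Finset.univ.filter (fun s : Fin k → Bool => C (∑ i, w i * sgn (s i))), E s := by
    ext ω
    simp only [Set.mem_setOf_eq, Set.mem_iUnion, Finset.mem_filter, Finset.mem_univ, true_and,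
      hE, Set.mem_iInter, Set.mem_preimage, Set.mem_singleton_iff]
    have hkey : ∀ i, X i ω = sgn (decide (X i ω = 1)) := by
      intro i
      rcases hval i ω with h' | h'
      · have hd : decide (X i ω = 1) = false := decide_eq_false (by rw [h']; norm_num)
        rw [hd, h']; rfl
      · rw [decide_eq_true h', h']; rfl
    constructor
    · intro h
      refine ⟨fun i => decide (X i ω = 1), ?_, fun i => hkey i⟩
      have : (∑ i, w i * sgn (decide (X i ω = 1))) = ∑ i, w i * X i ω := by
        apply Finset.sum_congr rfl
        intro i _
        rw [← hkey i]
      rw [this]; exact h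
    · rintro ⟨s, hs, hsgn⟩
      have : (∑ i, w i * X i ω) = ∑ i, w i * sgn (s i) := by
        apply Finset.sum_congr rfl
        intro i _
        rw [hsgn i]
      rw [this]; exact hs
  rw [hset, measure_biUnion_finset ?_ fun s _ => hEmeas s]
  · exact Finset.sum_congr rfl fun s _ => hEprod s
  · intro s _ t _ hst
    simp only [Function.onFun, Set.disjoint_left]
    intro ω hωs hωt
    apply hst
    funext i
    have h1 : X i ω = sgn (s i) := by
      simp only [hE, Set.mem_iInter, Set.mem_preimage, Set.mem_singleton_iff] at hωs
      exact hωs i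
    have h2 : X i ω = sgn (t i) := by
      simp only [hE, Set.mem_iInter, Set.mem_preimage, Set.mem_singleton_iff] at hωt
      exact hωt i
    have hh := h1.symm.trans h2
    revert hh
    cases s i <;> cases t i <;> intro hh <;> first | rfl | (exfalso; norm_num [sgn] at hh)


lemma half
    {k : ℕ} {Ω : Type} [MeasurableSpace Ω] (μ : Measure Ω) [IsProbabilityMeasure μ]
    (α : ℝ) (hα0 : 0 ≤ α) (hα1 : α ≤ 1/2)
    (X : Fin k → Ω → ℝ) (hmeas : ∀ i, Measurable (X i))
    (hval : ∀ i ω, X i ω = -1 ∨ X i ω = 1)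
    (hprob : ∀ i, μ {ω | X i ω = -1} = ENNReal.ofReal α)
    (hindep : iIndepFun X μ)
    (w : Fin k → ℝ) (hw : ∀ i, 0 ≤ w i) :
    μ {ω | (∑ i, w i * X i ω) < 0} ≤ 1/2 ∧
      ∀ δ : ℝ, 0 ≤ δ →
        μ {ω | (∑ i, w i * X i ω) < -δ} ≤ μ {ω | δ < ∑ i, w i * X i ω} := by
  classical
  have key : ∀ δ : ℝ, 0 ≤ δ →
      μ {ω | (∑ i, w i * X i ω) < -δ} ≤ μ {ω | δ < ∑ i, w i * X i ω} := by
    intro δ hδ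
    rw [measure_eq_sum μ α hα0 X hmeas hval hprob hindep (fun x => x < -δ) w,
      measure_eq_sum μ α hα0 X hmeas hval hprob hindep (fun x => δ < x) w]
    have hfac : ∀ s : Fin k → Bool, (∏ i, ENNReal.ofReal (if s i then 1 - α else α)) =
        ∏ i, (ENNReal.ofReal α + if s i then ENNReal.ofReal (1 - 2*α) else 0) := by
      intro s
      apply Finset.prod_congr rfl
      intro i _
      cases s i
      · simp
      · simp only [if_true]
        rw [← ENNReal.ofReal_add hα0 (by linarith)]
        congr 1
        ring
    simp only [hfac]
    exact comb (ENNReal.ofReal α) (ENNReal.ofReal (1 - 2*α)) w hw δ hδ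
  refine ⟨?_, key⟩
  have h0 : μ {ω | (∑ i, w i * X i ω) < 0} ≤ μ {ω | 0 < ∑ i, w i * X i ω} := by
    have := key 0 le_rfl
    rwa [neg_zero] at this
  have hf : Measurable fun ω => ∑ i, w i * X i ω :=
    Finset.measurable_sum Finset.univ fun i _ => (hmeas i).const_mul (w i)
  have hBm : MeasurableSet {ω | 0 < ∑ i, w i * X i ω} :=
    measurableSet_lt measurable_const hf
  have hdisj : Disjoint {ω | (∑ i, w i * X i ω) < 0} {ω | 0 < ∑ i, w i * X i ω} := by
    rw [Set.disjoint_left]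
    intro ω h1 h2
    simp only [Set.mem_setOf_eq] at h1 h2
    linarith
  have hsum : μ {ω | (∑ i, w i * X i ω) < 0} + μ {ω | 0 < ∑ i, w i * X i ω} ≤ 1 := by
    rw [← measure_union hdisj hBm]
    exact prob_le_one
  rw [ENNReal.le_div_iff_mul_le (Or.inl two_ne_zero) (Or.inl ENNReal.ofNat_ne_top)]
  calc μ {ω | (∑ i, w i * X i ω) < 0} * 2
      = μ {ω | (∑ i, w i * X i ω) < 0} + μ {ω | (∑ i, w i * X i ω) < 0} := by
        rw [mul_two]
    _ ≤ μ {ω | (∑ i, w i * X i ω) < 0} + μ {ω | 0 < ∑ i, w i * X i ω} :=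
        add_le_add_right h0 _
    _ ≤ 1 := hsum

end Stmt5Aux

open Stmt5Aux in
/-- For independent random signs `X i` with `P(X i = -1) = α ≤ 1/2`
and weights `w i`, the weighted sum `X = Σ w i X i` satisfies: if all `w i ≥ 0` then
`P(X < 0) ≤ 1/2` and `P(X > δ) ≥ P(X < -δ)` for all `δ ≥ 0`; symmetrically if all
`w i ≤ 0` then `P(X > 0) ≤ 1/2` and `P(X < -δ) ≥ P(X > δ)`. -/
theorem stmt5_signed_sum_median
    (k : ℕ) (α : ℝ) (hα0 : 0 ≤ α) (hα1 : α ≤ 1/2)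
    {Ω : Type} [MeasurableSpace Ω] (μ : Measure Ω) [IsProbabilityMeasure μ]
    (X : Fin k → Ω → ℝ) (hmeas : ∀ i, Measurable (X i))
    (hval : ∀ i ω, X i ω = -1 ∨ X i ω = 1)
    (hprob : ∀ i, μ {ω | X i ω = -1} = ENNReal.ofReal α)
    (hindep : iIndepFun X μ)
    (w : Fin k → ℝ) :
    ((∀ i, 0 ≤ w i) →
      μ {ω | (∑ i, w i * X i ω) < 0} ≤ 1/2 ∧
      ∀ δ : ℝ, 0 ≤ δ →
        μ {ω | (∑ i, w i * X i ω) < -δ} ≤ μ {ω | δ < ∑ i, w i * X i ω}) ∧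
    ((∀ i, w i ≤ 0) →
      μ {ω | 0 < (∑ i, w i * X i ω)} ≤ 1/2 ∧
      ∀ δ : ℝ, 0 ≤ δ →
        μ {ω | δ < ∑ i, w i * X i ω} ≤ μ {ω | (∑ i, w i * X i ω) < -δ}) := by
  constructor
  · intro hw
    exact half μ α hα0 hα1 X hmeas hval hprob hindep w hw
  · intro hw
    have hw' : ∀ i, 0 ≤ (fun i => -w i) i := fun i => neg_nonneg.2 (hw i)
    obtain ⟨h1, h2⟩ := half μ α hα0 hα1 X hmeas hval hprob hindep (fun i => -w i) hw'
    have hsum : ∀ ω, (∑ i, (-w i) * X i ω) = -(∑ i, w i * X i ω) := by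
      intro ω
      rw [← Finset.sum_neg_distrib]
      exact Finset.sum_congr rfl fun i _ => neg_mul _ _
    constructor
    · have hset : {ω | (∑ i, (-w i) * X i ω) < 0} = {ω | 0 < (∑ i, w i * X i ω)} := by
        ext ω
        simp only [Set.mem_setOf_eq, hsum ω]
        constructor <;> intro h <;> linarith
      rw [← hset]
      exact h1
    · intro δ hδ
      have hset1 : {ω | (∑ i, (-w i) * X i ω) < -δ} = {ω | δ < ∑ i, w i * X i ω} := by
        ext ω
        simp only [Set.mem_setOf_eq, hsum ω]
        constructor <;> intro h <;> linarith
      have hset2 : {ω | δ < ∑ i, (-w i) * X i ω} = {ω | (∑ i, w i * X i ω) < -δ} := by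
        ext ω
        simp only [Set.mem_setOf_eq, hsum ω]
        constructor <;> intro h <;> linarith
      rw [← hset1, ← hset2]
      exact h2 δ hδ
end

section
/- Let 0 ≤ α ≤ 1/2, let w_1,…,w_n be arbitrary nonnegative rationals, and let X_1,…,X_n be independent random variables each equal to −1 with probability α and 1 otherwise. Set X = Σ_{i=1}^n w_i X_i. Then P(X > 2·E[X]) ≤ 7/8. Symmetrically, if all w_i are nonpositive rationals, then P(X < 2·E[X]) ≤ 7/8. -/
open MeasureTheory ProbabilityTheory

namespace Stmt6Aux
open Finset
open scoped Classical ENNReal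

variable {k : ℕ}

lemma sum_push {γ : Type*} [Fintype γ] [DecidableEq γ] (r : γ → ℝ) (p : Bool → ℝ) (ρ : γ → Bool)
    (hp : ∀ b, p b = ∑ x ∈ univ.filter (fun x => ρ x = b), r x)
    (h : (Fin k → Bool) → ℝ) :
    ∑ b : Fin k → Bool, h b * ∏ i, p (b i)
      = ∑ s : Fin k → γ, h (ρ ∘ s) * ∏ i, r (s i) := by
  classical
  have key : ∀ b : Fin k → Bool,
      h b * ∏ i, p (b i) = ∑ s ∈ univ.filter (fun s : Fin k → γ => ρ ∘ s = b), h (ρ ∘ s) * ∏ i, r (s i) := by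
    intro b
    have h1 : ∏ i, p (b i) = ∑ s ∈ Fintype.piFinset (fun i => univ.filter (fun x => ρ x = b i)), ∏ i, r (s i) := by
      rw [← Finset.prod_univ_sum]
      exact Finset.prod_congr rfl fun i _ => hp (b i)
    have h2 : Fintype.piFinset (fun i => univ.filter (fun x => ρ x = b i))
        = univ.filter (fun s : Fin k → γ => ρ ∘ s = b) := by
      ext s
      simp only [Fintype.mem_piFinset, mem_filter, mem_univ, true_and, funext_iff]
      rfl
    rw [h1, h2, Finset.mul_sum]
    refine Finset.sum_congr rfl fun s hs => ?_
    rw [(mem_filter.mp hs).2]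
  rw [Finset.sum_congr rfl (fun b _ => key b)]
  exact Finset.sum_fiberwise_of_maps_to (fun s _ => mem_univ _) _

lemma core (k : ℕ) (α : ℝ) (h1 : 1/4 < α) (h2 : α ≤ 1/2) (w : Fin k → ℝ) (hw : ∀ i, 0 ≤ w i) :
    (1:ℝ)/8 ≤ ∑ b ∈ univ.filter (fun b : Fin k → Bool =>
        (∑ i, w i * (if b i then -1 else 1)) ≤ 2*((1-2*α)*∑ i, w i)),
      ∏ i, (if b i then α else 1-α) := by
  set S := ∑ i, w i with hS
  set c := 2*((1-2*α)*S) with hc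
  have hS0 : 0 ≤ S := Finset.sum_nonneg fun i _ => hw i
  have hc0 : 0 ≤ c := by nlinarith
  set r : Bool × Bool → ℝ := fun x => if x.1 then α else (1-2*α)/2 with hr
  set p : Bool → ℝ := fun b => if b then α else 1-α with hpdef
  have hα0 : (0:ℝ) < α := lt_trans (by norm_num) h1
  have hr0 : ∀ x, 0 ≤ r x := by
    intro x; rw [hr]; dsimp only
    split
    · exact le_of_lt hα0
    · linarith
  have hp : ∀ b, p b = ∑ x ∈ univ.filter (fun x : Bool × Bool => (x.1 && x.2) = b), r x := by
    intro b; cases b <;> simp [hr, hpdef, Finset.sum_filter, Fintype.sum_prod_type] <;> ring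
  set atom : (Fin k → Bool × Bool) → ℝ := fun s => ∏ i, r (s i) with hatom
  have hatom0 : ∀ s, 0 ≤ atom s := fun s => Finset.prod_nonneg fun i _ => hr0 _
  set C : (Fin k → Bool × Bool) → ℝ := fun s => ∑ i, w i * (if (s i).1 then 0 else 1) with hC
  set D : (Fin k → Bool × Bool) → ℝ := fun s => ∑ i, w i * (if (s i).1 then (if (s i).2 then -1 else 1) else 0) with hD
  set F : (Fin k → Bool × Bool) → ℝ := fun s => ∑ i, w i * (if (s i).1 && (s i).2 then -1 else 1) with hF
  have hCD : ∀ s, F s = C s + D s := by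
    intro s; rw [hF, hC, hD]; dsimp only
    rw [← Finset.sum_add_distrib]
    refine Finset.sum_congr rfl fun i _ => ?_
    cases hu : (s i).1 <;> cases hv : (s i).2 <;> simp <;> ring
  have hC0 : ∀ s, 0 ≤ C s := by
    intro s; refine Finset.sum_nonneg fun i _ => ?_
    have := hw i; split <;> nlinarith
  have hsum_r : ∑ x : Bool × Bool, r x = 1 := by
    simp [hr, Fintype.sum_prod_type]; ring
  have total : ∑ s : Fin k → Bool × Bool, atom s = 1 := by
    rw [hatom]
    rw [← Fintype.piFinset_univ, ← Finset.prod_univ_sum]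
    simp [hsum_r]
  have marg : ∀ i0 : Fin k, ∑ s : Fin k → Bool × Bool, atom s * (if (s i0).1 then 0 else 1) = 1 - 2*α := by
    intro i0
    have step : ∀ s : Fin k → Bool × Bool,
        atom s * (if (s i0).1 then 0 else 1)
          = ∏ i, (r (s i) * (if i = i0 then (if (s i).1 then 0 else 1) else 1)) := by
      intro s
      rw [Finset.prod_mul_distrib, hatom]
      congr 1
      rw [Finset.prod_ite_eq' univ i0 (fun i => if (s i).1 then (0:ℝ) else 1)]
      simp
    rw [Finset.sum_congr rfl fun s _ => step s]
    have pu := Finset.prod_univ_sum (fun _ : Fin k => (univ : Finset (Bool × Bool)))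
      (fun i x => r x * (if i = i0 then (if x.1 then (0:ℝ) else 1) else 1))
    rw [Fintype.piFinset_univ] at pu
    rw [← pu]
    have inner : ∀ i : Fin k, (∑ x : Bool × Bool, r x * (if i = i0 then (if x.1 then (0:ℝ) else 1) else 1))
        = if i = i0 then 1 - 2*α else 1 := by
      intro i
      by_cases h : i = i0 <;> simp [h, hsum_r, hr, Fintype.sum_prod_type] <;> ring
    rw [Finset.prod_congr rfl fun i _ => inner i]
    rw [Finset.prod_ite_eq' univ i0 (fun _ => (1:ℝ) - 2*α)]
    simp
  have EC : ∑ s : Fin k → Bool × Bool, atom s * C s = (1-2*α) * S := by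
    have key : ∀ s, atom s * C s = ∑ i, w i * (atom s * (if (s i).1 then 0 else 1)) := by
      intro s; rw [hC]; dsimp only; rw [Finset.mul_sum]
      exact Finset.sum_congr rfl fun i _ => by ring
    rw [Finset.sum_congr rfl fun s _ => key s, Finset.sum_comm, hS, Finset.mul_sum]
    refine Finset.sum_congr rfl fun i _ => ?_
    rw [← Finset.mul_sum, marg i]
    ring
  have hECc : ∑ s : Fin k → Bool × Bool, atom s * C s = c/2 := by rw [EC, hc]; ring
  have markov : ∑ s ∈ univ.filter (fun s => c < C s), atom s ≤ 1/2 := by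
    by_cases hcpos : 0 < c
    · have h1' : c * ∑ s ∈ univ.filter (fun s => c < C s), atom s
          ≤ ∑ s ∈ univ.filter (fun s => c < C s), atom s * C s := by
        rw [Finset.mul_sum]
        refine Finset.sum_le_sum fun s hs => ?_
        have := (mem_filter.mp hs).2
        nlinarith [hatom0 s]
      have h2' : ∑ s ∈ univ.filter (fun s => c < C s), atom s * C s
          ≤ ∑ s : Fin k → Bool × Bool, atom s * C s := by
        refine Finset.sum_le_sum_of_subset_of_nonneg (Finset.filter_subset _ _) fun s _ _ => ?_
        exact mul_nonneg (hatom0 s) (hC0 s)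
      rw [hECc] at h2'
      have h3' : c * ∑ s ∈ univ.filter (fun s => c < C s), atom s ≤ c * (1/2) := by
        calc c * _ ≤ c/2 := le_trans h1' h2'
          _ = c * (1/2) := by ring
      exact le_of_mul_le_mul_left h3' hcpos
    · push_neg at hcpos
      have hzero : ∀ s, atom s * C s = 0 := by
        have hnn : ∀ s ∈ (univ : Finset (Fin k → Bool × Bool)), 0 ≤ atom s * C s :=
          fun s _ => mul_nonneg (hatom0 s) (hC0 s)
        have hs0 : ∑ s : Fin k → Bool × Bool, atom s * C s ≤ 0 := by rw [hECc]; linarith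
        have heq : ∑ s : Fin k → Bool × Bool, atom s * C s = 0 :=
          le_antisymm hs0 (Finset.sum_nonneg hnn)
        intro s
        exact (Finset.sum_eq_zero_iff_of_nonneg hnn).mp heq s (mem_univ s)
      have hz : ∑ s ∈ univ.filter (fun s => c < C s), atom s = 0 := by
        refine Finset.sum_eq_zero fun s hs => ?_
        have hcs := (mem_filter.mp hs).2
        have hCpos : 0 < C s := by linarith
        rcases mul_eq_zero.mp (hzero s) with h | h
        · exact h
        · exact absurd h (ne_of_gt hCpos)
      rw [hz]; norm_num
  have PA : (1:ℝ)/2 ≤ ∑ s ∈ univ.filter (fun s => C s ≤ c), atom s := by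
    have hpar := Finset.sum_filter_add_sum_filter_not univ (fun s => C s ≤ c) atom
    have hnot : univ.filter (fun s => ¬ C s ≤ c) = univ.filter (fun s => c < C s) := by
      apply Finset.filter_congr; intro s _; simp [not_le]
    rw [hnot, total] at hpar
    linarith
  set σ : (Fin k → Bool × Bool) → (Fin k → Bool × Bool) := fun s i => ((s i).1, !(s i).2) with hσ
  have hσinv : Function.Involutive σ := by
    intro s; funext i; simp [hσ]
  have hσatom : ∀ s, atom (σ s) = atom s := by
    intro s; rfl
  have hσC : ∀ s, C (σ s) = C s := by
    intro s; rfl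
  have hσD : ∀ s, D (σ s) = -D s := by
    intro s; rw [hD]; dsimp only
    rw [← Finset.sum_neg_distrib]
    refine Finset.sum_congr rfl fun i _ => ?_
    cases hu : (s i).1 <;> cases hv : (s i).2 <;> simp [hσ, hu, hv]
  set B := univ.filter (fun s => C s ≤ c ∧ D s ≤ 0) with hB
  set Ap := univ.filter (fun s => C s ≤ c ∧ 0 < D s) with hAp
  have e1 : (univ.filter (fun s => C s ≤ c)).filter (fun s => D s ≤ 0) = B := by
    rw [hB, Finset.filter_filter]
  have e2 : (univ.filter (fun s => C s ≤ c)).filter (fun s => ¬ D s ≤ 0) = Ap := by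
    rw [Finset.filter_filter, hAp]
    apply Finset.filter_congr; intro s _; simp [not_le]
  have hsplit : ∑ s ∈ univ.filter (fun s => C s ≤ c), atom s
      = ∑ s ∈ B, atom s + ∑ s ∈ Ap, atom s := by
    have hpar := Finset.sum_filter_add_sum_filter_not (univ.filter (fun s => C s ≤ c)) (fun s => D s ≤ 0) atom
    rw [e1, e2] at hpar
    linarith
  have hApB : ∑ s ∈ Ap, atom s ≤ ∑ s ∈ B, atom s := by
    have himg : ∑ s ∈ Ap, atom s = ∑ s ∈ Ap.image σ, atom s := by
      rw [Finset.sum_image (fun a _ b _ h => hσinv.injective h)]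
    rw [himg]
    refine Finset.sum_le_sum_of_subset_of_nonneg ?_ (fun s _ _ => hatom0 s)
    intro s hs
    rcases Finset.mem_image.mp hs with ⟨t, ht, rfl⟩
    have htc := (mem_filter.mp ht).2
    rw [hB, mem_filter]
    refine ⟨mem_univ _, ?_, ?_⟩
    · rw [hσC]; exact htc.1
    · rw [hσD]; linarith [htc.2]
  have PB : (1:ℝ)/4 ≤ ∑ s ∈ B, atom s := by linarith
  have hBF : ∑ s ∈ B, atom s ≤ ∑ s ∈ univ.filter (fun s => F s ≤ c), atom s := by
    refine Finset.sum_le_sum_of_subset_of_nonneg ?_ (fun s _ _ => hatom0 s)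
    intro s hs
    have h := (mem_filter.mp hs).2
    rw [mem_filter]
    exact ⟨mem_univ _, by rw [hCD]; linarith [h.1, h.2]⟩
  -- now transfer back to Bool sums
  have hfilt : ∑ b ∈ univ.filter (fun b : Fin k → Bool =>
        (∑ i, w i * (if b i then -1 else 1)) ≤ c), ∏ i, p (b i)
      = ∑ b : Fin k → Bool, (if (∑ i, w i * (if b i then -1 else 1)) ≤ c then (1:ℝ) else 0) * ∏ i, p (b i) := by
    rw [Finset.sum_filter]
    refine Finset.sum_congr rfl fun b _ => ?_
    split <;> simp
  have push := sum_push r p (fun x => x.1 && x.2)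
      hp (fun b => if (∑ i, w i * (if b i then -1 else 1)) ≤ c then (1:ℝ) else 0)
  have hback : ∑ s : Fin k → Bool × Bool,
        (if (∑ i, w i * (if ((fun x : Bool × Bool => x.1 && x.2) ∘ s) i then -1 else 1)) ≤ c then (1:ℝ) else 0) * ∏ i, r (s i)
      = ∑ s ∈ univ.filter (fun s => F s ≤ c), atom s := by
    rw [Finset.sum_filter]
    refine Finset.sum_congr rfl fun s _ => ?_
    rw [hF, hatom]
    dsimp only [Function.comp]
    split <;> simp
  calc (1:ℝ)/8 ≤ 1/4 := by norm_num
    _ ≤ ∑ s ∈ B, atom s := PB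
    _ ≤ ∑ s ∈ univ.filter (fun s => F s ≤ c), atom s := hBF
    _ = _ := by rw [← hback, ← push, ← hfilt]

lemma main_pos (k : ℕ) (α : ℝ) (hα0 : 0 ≤ α) (hα1 : α ≤ 1/2)
    {Ω : Type} [MeasurableSpace Ω] (μ : Measure Ω) [IsProbabilityMeasure μ]
    (X : Fin k → Ω → ℝ) (hmeas : ∀ i, Measurable (X i))
    (hval : ∀ i ω, X i ω = -1 ∨ X i ω = 1)
    (hprob : ∀ i, μ {ω | X i ω = -1} = ENNReal.ofReal α)
    (hindep : iIndepFun X μ)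
    (w : Fin k → ℝ) (hw : ∀ i, 0 ≤ w i) :
    μ {ω | 2 * (∫ ω', (∑ i, w i * X i ω') ∂μ) < ∑ i, w i * X i ω} ≤ 7/8 := by
  set S := ∑ i, w i with hS
  have hS0 : 0 ≤ S := Finset.sum_nonneg fun i _ => hw i
  set A : Fin k → Set Ω := fun i => X i ⁻¹' {-1} with hA
  have hAm : ∀ i, MeasurableSet (A i) := fun i => (hmeas i) (measurableSet_singleton _)
  have hAprob : ∀ i, μ (A i) = ENNReal.ofReal α := by
    intro i
    have : A i = {ω | X i ω = -1} := by ext ω; simp [hA]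
    rw [this, hprob i]
  -- integral computation
  have hXind : ∀ i, X i = fun ω => 1 - 2 * (A i).indicator (fun _ => (1:ℝ)) ω := by
    intro i; funext ω
    rcases hval i ω with h | h
    · have hmem : ω ∈ A i := by simp [hA, h]
      rw [h, Set.indicator_of_mem hmem]; norm_num
    · have hmem : ω ∉ A i := by simp [hA, h]; norm_num
      rw [h, Set.indicator_of_notMem hmem]; norm_num
  have hXint : ∀ i, Integrable (X i) μ := by
    intro i; rw [hXind i]
    exact (integrable_const 1).sub ((Integrable.indicator (integrable_const 1) (hAm i)).const_mul 2)
  have hXmean : ∀ i, ∫ ω, X i ω ∂μ = 1 - 2*α := by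
    intro i
    rw [hXind i]
    rw [integral_sub (integrable_const 1) ((Integrable.indicator (integrable_const 1) (hAm i)).const_mul 2)]
    rw [integral_const_mul, integral_indicator_const _ (hAm i), integral_const]
    simp [Measure.real, hAprob i, ENNReal.toReal_ofReal hα0]
  have EX : ∫ ω, (∑ i, w i * X i ω) ∂μ = (1-2*α) * S := by
    rw [integral_finset_sum univ (fun i _ => (hXint i).const_mul (w i))]
    rw [hS, Finset.mul_sum]
    refine Finset.sum_congr rfl fun i _ => ?_
    rw [integral_const_mul, hXmean i]; ring
  set c := 2*((1-2*α)*S) with hc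
  have hgoal : {ω | 2 * (∫ ω', (∑ i, w i * X i ω') ∂μ) < ∑ i, w i * X i ω}
      = {ω | c < ∑ i, w i * X i ω} := by
    rw [EX]
  rw [hgoal]
  by_cases hα14 : α ≤ 1/4
  · -- event is empty
    have hempty : {ω | c < ∑ i, w i * X i ω} = ∅ := by
      rw [Set.eq_empty_iff_forall_notMem]
      intro ω hω
      have hle : ∑ i, w i * X i ω ≤ S := by
        rw [hS]
        refine Finset.sum_le_sum fun i _ => ?_
        have hXle : X i ω ≤ 1 := by rcases hval i ω with h | h <;> rw [h] <;> norm_num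
        nlinarith [hw i]
      have hcS : S ≤ c := by rw [hc]; nlinarith
      simp only [Set.mem_setOf_eq] at hω
      linarith
    rw [hempty]
    simp
  · push_neg at hα14
    -- transfer to finite space
    set T : Ω → (Fin k → Bool) := fun ω i => decide (X i ω = -1) with hT
    set sb : (Fin k → Bool) → Fin k → Set Ω := fun b i => if b i then A i else (A i)ᶜ with hsb
    have hTset : ∀ b, {ω | T ω = b} = ⋂ i, sb b i := by
      intro b; ext ω
      simp only [Set.mem_setOf_eq, funext_iff, Set.mem_iInter]
      apply forall_congr'; intro i
      cases hbi : b i <;> simp [hT, hsb, hbi, hA]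
    have hTmeas : ∀ b, MeasurableSet {ω | T ω = b} := by
      intro b; rw [hTset b]
      exact MeasurableSet.iInter fun i => by
        rw [hsb]; dsimp only; split
        · exact hAm i
        · exact (hAm i).compl
    have hμT : ∀ b, μ {ω | T ω = b}
        = ∏ i, ENNReal.ofReal (if b i then α else 1-α) := by
      intro b
      rw [hTset b]
      rw [hindep.meas_iInter (fun i => ?_)]
      · refine Finset.prod_congr rfl fun i _ => ?_
        rw [hsb]; dsimp only
        cases hbi : b i
        · simp only [if_false, Bool.false_eq_true]
          rw [prob_compl_eq_one_sub (hAm i), hAprob i]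
          rw [ENNReal.ofReal_sub _ hα0, ENNReal.ofReal_one]
        · simp only [if_true]
          exact hAprob i
      · rw [hsb]; dsimp only
        split
        · exact ⟨{-1}, measurableSet_singleton _, rfl⟩
        · exact ⟨({-1} : Set ℝ)ᶜ, (measurableSet_singleton _).compl, by rw [Set.preimage_compl]⟩
    -- pointwise sum identification
    have key : ∀ ω, ∑ i, w i * X i ω = ∑ i, w i * (if T ω i then -1 else 1) := by
      intro ω
      refine Finset.sum_congr rfl fun i _ => ?_
      rcases hval i ω with h | h
      · simp [hT, h]
      · have hne : X i ω ≠ -1 := by rw [h]; norm_num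
        have hd : T ω i = false := by simp [hT, hne]
        rw [hd, h]; norm_num
    set G : (Fin k → Bool) → Prop := fun b => (∑ i, w i * (if b i then -1 else 1)) ≤ c with hG
    have hEset : {ω | ∑ i, w i * X i ω ≤ c} = ⋃ b ∈ univ.filter G, {ω | T ω = b} := by
      ext ω
      simp only [Set.mem_setOf_eq, Set.mem_iUnion, exists_prop, mem_filter, mem_univ, true_and]
      constructor
      · intro h
        exact ⟨T ω, by rw [hG]; dsimp only; rw [← key ω]; exact h, rfl⟩
      · rintro ⟨b, hGb, hTb⟩
        rw [key ω, hTb]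
        exact hGb
    have hEmeas : MeasurableSet {ω | ∑ i, w i * X i ω ≤ c} := by
      have hm : Measurable fun ω => ∑ i, w i * X i ω :=
        Finset.measurable_sum univ (fun i _ => (hmeas i).const_mul (w i))
      exact hm measurableSet_Iic
    have hElow : ENNReal.ofReal (1/8) ≤ μ {ω | ∑ i, w i * X i ω ≤ c} := by
      rw [hEset, measure_biUnion_finset ?hd (fun b _ => hTmeas b)]
      case hd =>
        intro b _ b' _ hne
        rw [Function.onFun, Set.disjoint_left]
        intro ω hb hb'
        have h1 : T ω = b := hb
        have h2 : T ω = b' := hb'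
        exact hne (h1.symm.trans h2)
      have hpnn : ∀ b : Fin k → Bool, ∀ i ∈ univ, (0:ℝ) ≤ (if b i then α else 1-α) := by
        intro b i _
        split
        · exact hα0
        · linarith
      have conv : ∀ b, μ {ω | T ω = b} = ENNReal.ofReal (∏ i, (if b i then α else 1-α)) := by
        intro b
        rw [hμT b, ← ENNReal.ofReal_prod_of_nonneg (hpnn b)]
      rw [Finset.sum_congr rfl fun b _ => conv b]
      rw [← ENNReal.ofReal_sum_of_nonneg (fun b _ => Finset.prod_nonneg (hpnn b))]
      exact ENNReal.ofReal_le_ofReal (core k α hα14 hα1 w hw)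
    -- complement
    have hcompl : {ω | c < ∑ i, w i * X i ω} = {ω | ∑ i, w i * X i ω ≤ c}ᶜ := by
      ext ω; simp [not_le]
    rw [hcompl, prob_compl_eq_one_sub hEmeas]
    rw [tsub_le_iff_right]
    calc (1:ℝ≥0∞) = 7/8 + 1/8 := by
          rw [ENNReal.div_add_div_same]; norm_num
          rw [ENNReal.div_self] <;> norm_num
      _ ≤ 7/8 + μ {ω | ∑ i, w i * X i ω ≤ c} := by
          gcongr
          calc (1:ℝ≥0∞)/8 = ENNReal.ofReal (1/8) := by
                rw [ENNReal.ofReal_div_of_pos] <;> norm_num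
            _ ≤ _ := hElow

end Stmt6Aux

/-- For independent random signs `X i` with `P(X i = -1) = α ≤ 1/2`
and rational weights `w i`, the weighted sum `X = Σ w i X i` satisfies
`P(X > 2 E[X]) ≤ 7/8` when all `w i ≥ 0`, and symmetrically `P(X < 2 E[X]) ≤ 7/8`
when all `w i ≤ 0`. -/
theorem stmt6_anticoncentration_at_twice_mean
    (k : ℕ) (α : ℝ) (hα0 : 0 ≤ α) (hα1 : α ≤ 1/2)
    {Ω : Type} [MeasurableSpace Ω] (μ : Measure Ω) [IsProbabilityMeasure μ]
    (X : Fin k → Ω → ℝ) (hmeas : ∀ i, Measurable (X i))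
    (hval : ∀ i ω, X i ω = -1 ∨ X i ω = 1)
    (hprob : ∀ i, μ {ω | X i ω = -1} = ENNReal.ofReal α)
    (hindep : iIndepFun X μ)
    (w : Fin k → ℚ) :
    ((∀ i, 0 ≤ w i) →
      μ {ω | 2 * (∫ ω', (∑ i, (w i : ℝ) * X i ω') ∂μ) < ∑ i, (w i : ℝ) * X i ω}
        ≤ 7/8) ∧
    ((∀ i, w i ≤ 0) →
      μ {ω | (∑ i, (w i : ℝ) * X i ω) < 2 * ∫ ω', (∑ i, (w i : ℝ) * X i ω') ∂μ}
        ≤ 7/8) := by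
  constructor
  · intro hw
    exact Stmt6Aux.main_pos k α hα0 hα1 μ X hmeas hval hprob hindep
      (fun i => (w i : ℝ)) (fun i => by exact_mod_cast hw i)
  · intro hw
    have hneg : ∀ ω, ∑ i, (-(w i : ℝ)) * X i ω = -∑ i, (w i : ℝ) * X i ω := by
      intro ω
      rw [← Finset.sum_neg_distrib]
      exact Finset.sum_congr rfl fun i _ => (neg_mul _ _)
    have hint : (∫ ω', (∑ i, (-(w i : ℝ)) * X i ω') ∂μ)
        = -∫ ω', (∑ i, (w i : ℝ) * X i ω') ∂μ := by
      rw [← integral_neg]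
      exact integral_congr_ae (Filter.Eventually.of_forall fun ω => hneg ω)
    have hset : {ω | (∑ i, (w i : ℝ) * X i ω) < 2 * ∫ ω', (∑ i, (w i : ℝ) * X i ω') ∂μ}
        = {ω | 2 * (∫ ω', (∑ i, (-(w i : ℝ)) * X i ω') ∂μ) < ∑ i, (-(w i : ℝ)) * X i ω} := by
      ext ω
      simp only [Set.mem_setOf_eq, hint, hneg ω]
      constructor <;> intro h <;> linarith
    rw [hset]
    exact Stmt6Aux.main_pos k α hα0 hα1 μ X hmeas hval hprob hindep
      (fun i => -(w i : ℝ)) (fun i => by simp only [neg_nonneg]; exact_mod_cast hw i)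
end

section
/- Consider the CCC_n network (n = 2^m wires) with any fixed orientation of the balancers, and suppose the number of tokens on each input wire is an independent uniform random variable on {0,1,…,n−1}. Then every balancer b in any layer ℓ, 1 ≤ ℓ ≤ log n, satisfies P(Odd(b) = 1) = 1/2; moreover, for every output wire i, the random variables { Odd(b) : b ∈ B_i } are mutually independent. -/
open MeasureTheory ProbabilityTheory
open scoped ENNReal

namespace BalNet

variable {n : ℕ}

/-- A matching given as a finset of ordered pairs `(u,v)` with `u < v`,
pairwise vertex-disjoint. -/
def IsMatching (E : Finset (Fin n × Fin n)) : Prop :=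
  (∀ e ∈ E, e.1 < e.2) ∧
    ∀ e ∈ E, ∀ e' ∈ E, e ≠ e' →
      e.1 ≠ e'.1 ∧ e.1 ≠ e'.2 ∧ e.2 ≠ e'.1 ∧ e.2 ≠ e'.2

/-- The balancing matrix `P` associated to a matching. -/
noncomputable def balMatrix (E : Finset (Fin n × Fin n)) : Matrix (Fin n) (Fin n) ℝ :=
  Matrix.of fun u v =>
    if u = v then (if ∃ e ∈ E, u = e.1 ∨ u = e.2 then (1 : ℝ)/2 else 1)
    else if (u, v) ∈ E ∨ (v, u) ∈ E then 1/2 else 0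

/-- One balancing round: every matched pair splits the sum of its loads as evenly as
possible; `pt e` is the endpoint of `e` receiving the excess token (if any). -/
noncomputable def balStep (E : Finset (Fin n × Fin n)) (pt : Fin n × Fin n → Fin n)
    (y : Fin n → ℤ) : Fin n → ℤ := fun v =>
  if h : ∃ e ∈ E, v = e.1 ∨ v = e.2 then
    if v = pt h.choose then Int.fdiv (y h.choose.1 + y h.choose.2 + 1) 2
    else Int.fdiv (y h.choose.1 + y h.choose.2) 2
  else y v

/-- The load vector after `t` rounds (matching `M i` and orientation `pt i` are used
in round `i`, for `i = 1, 2, …`). -/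
noncomputable def loads (M : ℕ → Finset (Fin n × Fin n)) (pt : ℕ → Fin n × Fin n → Fin n)
    (y0 : Fin n → ℤ) : ℕ → Fin n → ℤ
  | 0 => y0
  | t + 1 => balStep (M (t + 1)) (pt (t + 1)) (loads M pt y0 t)

/-- Ordered matrix product `P^{[i,j]} = P i * P (i+1) * ⋯ * P j`
(the identity matrix when `i > j`). -/
noncomputable def matProd (P : ℕ → Matrix (Fin n) (Fin n) ℝ) (i j : ℕ) :
    Matrix (Fin n) (Fin n) ℝ :=
  ((List.range' i (j + 1 - i)).map P).prod

/-- The second largest eigenvalue in absolute value of a (symmetric doubly stochastic)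
matrix: the supremum of `|μ|` over eigenvalues `μ` possessing an eigenvector orthogonal
to the all-ones vector. -/
noncomputable def lambda2 (A : Matrix (Fin n) (Fin n) ℝ) : ℝ :=
  sSup {r : ℝ | ∃ μ : ℝ, r = |μ| ∧
    ∃ x : Fin n → ℝ, x ≠ 0 ∧ (∑ i, x i) = 0 ∧ A.mulVec x = μ • x}

/-- The realized orientation after the perturbation: `up t e = true` means that the
balancer `e` of round `t` initially points to `e.1`, and `fl t e = true` means that it
is flipped; the result is the vertex receiving the excess token. -/
def ptFrom (up fl : ℕ → Fin n × Fin n → Bool) : ℕ → Fin n × Fin n → Fin n :=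
  fun t e => if up t e = fl t e then e.2 else e.1

end BalNet

open BalNet

/-- The layer-`ℓ` matching of the `CCC` network on `2^m` wires: two wires are joined
by a balancer iff their binary representations differ exactly in bit `ℓ`. -/
def cccMatching (m ℓ : ℕ) : Finset (Fin (2^m) × Fin (2^m)) :=
  Finset.univ.filter (fun e => e.1 < e.2 ∧ (e.1.val ^^^ e.2.val) = 2^(ℓ-1))

/-- The wire differing from `u` exactly in bit `ℓ`. -/
def partnerWire (m ℓ : ℕ) (u : Fin (2^m)) : Fin (2^m) :=
  if h : u.val ^^^ 2^(ℓ-1) < 2^m then ⟨u.val ^^^ 2^(ℓ-1), h⟩ else u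

/-- `reachWire m k ℓ u i`: starting from wire `u` just after layer `ℓ`, the wire `i`
can be reached by a path through the `k` consecutive layers `ℓ+1, …, ℓ+k`. -/
def reachWire (m : ℕ) : ℕ → ℕ → Fin (2^m) → Fin (2^m) → Prop
  | 0, _, u, i => u = i
  | k+1, ℓ, u, i =>
      reachWire m k (ℓ+1) u i ∨ reachWire m k (ℓ+1) (partnerWire m (ℓ+1) u) i

/-- A balancer `e` of layer `ℓ` affects the wire `i` at the position just after layer
`ℓ'` (for `ℓ ≤ ℓ'`): there is a path through consecutive layers from `e` to `i`. -/
def balAffects (m ℓ : ℕ) (e : Fin (2^m) × Fin (2^m)) (ℓ' : ℕ) (i : Fin (2^m)) : Prop :=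
  reachWire m (ℓ' - ℓ) ℓ e.1 i ∨ reachWire m (ℓ' - ℓ) ℓ e.2 i

/-- The top wire (wire number 1) of the `CCC`. -/
def topWire (m : ℕ) : Fin (2^m) := ⟨0, Nat.two_pow_pos m⟩

namespace Stmt8Aux


lemma xor_div_pow (a b t : ℕ) : (a ^^^ b) / 2^t = a / 2^t ^^^ b / 2^t := by
  simp only [← Nat.shiftRight_eq_div_pow]
  apply Nat.eq_of_testBit_eq
  intro i
  simp [Nat.testBit_shiftRight, Nat.testBit_xor]

lemma xor_mod_pow (a b t : ℕ) : (a ^^^ b) % 2^t = a % 2^t ^^^ b % 2^t := by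
  apply Nat.eq_of_testBit_eq
  intro i
  simp only [Nat.testBit_mod_two_pow, Nat.testBit_xor]
  cases Decidable.em (i < t) <;> simp [*]

lemma xor_high (a ℓ t : ℕ) (h : ℓ < t) : (a ^^^ 2^ℓ) / 2^t = a / 2^t := by
  rw [xor_div_pow]
  have h2 : (2:ℕ)^ℓ / 2^t = 0 := Nat.div_eq_of_lt (Nat.pow_lt_pow_right one_lt_two h)
  simp [h2]

lemma xor_low (a ℓ t : ℕ) (h : t ≤ ℓ) : (a ^^^ 2^ℓ) % 2^t = a % 2^t := by
  rw [xor_mod_pow]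
  have h2 : (2:ℕ)^ℓ % 2^t = 0 := Nat.mod_eq_zero_of_dvd (pow_dvd_pow 2 h)
  simp [h2]

lemma div_two_eq_iff (p q : ℕ) : p / 2 = q / 2 ↔ p = q ∨ p = q ^^^ 1 := by
  have h1 : (q ^^^ 1) / 2 = q / 2 := by
    have := xor_div_pow q 1 1; simpa using this
  have h2 : (q ^^^ 1) % 2 = q % 2 ^^^ 1 := by
    have := xor_mod_pow q 1 1; simpa using this
  constructor
  · intro h
    have hq := Nat.div_add_mod q 2
    have hp := Nat.div_add_mod p 2
    have hq1 := Nat.div_add_mod (q ^^^ 1) 2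
    rw [h1, h2] at hq1
    have hqm : q % 2 = 0 ∨ q % 2 = 1 := by omega
    rcases hqm with h' | h' <;> rw [h'] at hq1 <;> simp at hq1 <;> omega
  · rintro (rfl | rfl) <;> simp [h1]

lemma div_pow_succ (a ℓ : ℕ) : a / 2^(ℓ+1) = a / 2^ℓ / 2 := by
  rw [Nat.div_div_eq_div_mul, pow_succ]

lemma div_succ_eq_iff (a b ℓ : ℕ) :
    a / 2^(ℓ+1) = b / 2^(ℓ+1) ↔ a / 2^ℓ = b / 2^ℓ ∨ a / 2^ℓ = (b ^^^ 2^ℓ) / 2^ℓ := by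
  have h1 : (b ^^^ 2^ℓ) / 2^ℓ = b / 2^ℓ ^^^ 1 := by
    rw [xor_div_pow, Nat.div_self (Nat.two_pow_pos ℓ)]
  rw [h1, div_pow_succ, div_pow_succ, div_two_eq_iff]

lemma xor_ne_self (a t : ℕ) : a ^^^ 2^t ≠ a := by
  intro h
  have h2 := congrArg (a ^^^ ·) h
  simp [← Nat.xor_assoc] at h2


lemma lt_two_cases {n : ℕ} (h : n < 2) : n = 0 ∨ n = 1 := by omega

lemma mod_succ_split (a b ℓ : ℕ) :
    a % 2^ℓ = b % 2^ℓ ↔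
      (a % 2^(ℓ+1) = b % 2^(ℓ+1) ∨ a % 2^(ℓ+1) = (b ^^^ 2^ℓ) % 2^(ℓ+1)) := by
  have hpow : (2:ℕ)^ℓ < 2^(ℓ+1) := Nat.pow_lt_pow_right one_lt_two (Nat.lt_succ_self ℓ)
  have hxm : (b ^^^ 2^ℓ) % 2^(ℓ+1) = b % 2^(ℓ+1) ^^^ 2^ℓ := by
    rw [xor_mod_pow]; congr 1; exact Nat.mod_eq_of_lt hpow
  set A := a % 2^(ℓ+1) with hAdef
  set B := b % 2^(ℓ+1) with hBdef
  have haA : a % 2^ℓ = A % 2^ℓ := (Nat.mod_mod_of_dvd a (pow_dvd_pow 2 (Nat.le_succ ℓ))).symm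
  have hbB : b % 2^ℓ = B % 2^ℓ := (Nat.mod_mod_of_dvd b (pow_dvd_pow 2 (Nat.le_succ ℓ))).symm
  have hXl : (B ^^^ 2^ℓ) % 2^ℓ = B % 2^ℓ := xor_low B ℓ ℓ le_rfl
  have hXh : (B ^^^ 2^ℓ) / 2^ℓ = B / 2^ℓ ^^^ 1 := by
    rw [xor_div_pow, Nat.div_self (Nat.two_pow_pos ℓ)]
  have hAlt : A < 2^ℓ * 2 := by
    have := Nat.mod_lt a (Nat.two_pow_pos (ℓ+1))
    calc A < 2^(ℓ+1) := this
    _ = 2^ℓ * 2 := by ring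
  have hBlt : B < 2^ℓ * 2 := by
    have := Nat.mod_lt b (Nat.two_pow_pos (ℓ+1))
    calc B < 2^(ℓ+1) := this
    _ = 2^ℓ * 2 := by ring
  have hA2 : A / 2^ℓ < 2 := Nat.div_lt_of_lt_mul (by linarith [hAlt])
  have hB2 : B / 2^ℓ < 2 := Nat.div_lt_of_lt_mul (by linarith [hBlt])
  have dA := Nat.div_add_mod A (2^ℓ)
  have dB := Nat.div_add_mod B (2^ℓ)
  have dX := Nat.div_add_mod (B ^^^ 2^ℓ) (2^ℓ)
  rw [hXh, hXl] at dX
  rw [haA, hbB, hxm]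
  constructor
  · intro h
    by_cases hd : A / 2^ℓ = B / 2^ℓ
    · left
      rw [hd, h] at dA
      exact dA.symm.trans dB
    · right
      have hdx : A / 2^ℓ = B / 2^ℓ ^^^ 1 := by
        rcases lt_two_cases hB2 with h0 | h0 <;>
          rcases lt_two_cases hA2 with h1 | h1 <;>
            rw [h0, h1] <;>
              first
                | decide
                | (exact absurd (h1.trans h0.symm) hd)
      rw [hdx, h] at dA
      exact dA.symm.trans dX
  · rintro (h | h)
    · rw [h]
    · rw [h, hXl]


section CCC

variable {m : ℕ}

lemma mem_ccc {ℓ : ℕ} {e : Fin (2^m) × Fin (2^m)} :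
    e ∈ cccMatching m ℓ ↔ e.1 < e.2 ∧ (e.1.val ^^^ e.2.val) = 2^(ℓ-1) := by
  simp [cccMatching]

lemma e2_val {ℓ : ℕ} {e : Fin (2^m) × Fin (2^m)} (he : e ∈ cccMatching m ℓ) :
    e.2.val = e.1.val ^^^ 2^(ℓ-1) := by
  have h := (mem_ccc.mp he).2
  rw [← h, xor_cancel_left]

lemma ccc_unique {ℓ : ℕ} {e e' : Fin (2^m) × Fin (2^m)} {v : Fin (2^m)}
    (he : e ∈ cccMatching m ℓ) (he' : e' ∈ cccMatching m ℓ)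
    (hv : v = e.1 ∨ v = e.2) (hv' : v = e'.1 ∨ v = e'.2) : e = e' := by
  have h2 := e2_val he
  have h2' := e2_val he'
  have hlt : e.1 < e.2 := (mem_ccc.mp he).1
  have hlt' : e'.1 < e'.2 := (mem_ccc.mp he').1
  have fext : ∀ (u w : Fin (2^m)), u.val = w.val → u = w := fun u w h => Fin.ext h
  rcases hv with rfl | rfl <;> rcases hv' with h' | h'
  · have h1 : e.1 = e'.1 := h'
    have : e.2 = e'.2 := fext _ _ (by rw [h2, h2', h1])
    exact Prod.ext h1 this
  · exfalso
    have hv1 : e.1.val = e'.2.val := congrArg Fin.val h'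
    have hv2 : e.2.val = e'.1.val := by
      rw [h2, hv1, h2', xor_cancel_right]
    have := Fin.lt_iff_val_lt_val.mp hlt
    have := Fin.lt_iff_val_lt_val.mp hlt'
    omega
  · exfalso
    have hv1 : e.2.val = e'.1.val := congrArg Fin.val h'
    have hv2 : e.1.val = e'.2.val := by
      rw [h2', ← hv1, h2, xor_cancel_right]
    have := Fin.lt_iff_val_lt_val.mp hlt
    have := Fin.lt_iff_val_lt_val.mp hlt'
    omega
  · have h1 : e.2 = e'.2 := h'
    have : e.1 = e'.1 := fext _ _ (by
      have := congrArg Fin.val h'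
      rw [h2, h2'] at this
      have := congrArg (· ^^^ 2^(ℓ-1)) this
      simpa [xor_cancel_right] using this)
    exact Prod.ext this h1

lemma partnerWire_val {ℓ : ℕ} (hℓm : ℓ ≤ m) (hℓ1 : 1 ≤ ℓ) (u : Fin (2^m)) :
    (partnerWire m ℓ u).val = u.val ^^^ 2^(ℓ-1) := by
  have hlt : u.val ^^^ 2^(ℓ-1) < 2^m :=
    Nat.xor_lt_two_pow u.isLt (Nat.pow_lt_pow_right one_lt_two (by omega))
  simp [partnerWire, hlt]

lemma partnerWire_ne {ℓ : ℕ} (hℓm : ℓ ≤ m) (hℓ1 : 1 ≤ ℓ) (u : Fin (2^m)) :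
    partnerWire m ℓ u ≠ u := by
  intro h
  have := congrArg Fin.val h
  rw [partnerWire_val hℓm hℓ1] at this
  exact xor_ne_self u.val (ℓ-1) this

/-- The canonical (ordered) edge of layer `ℓ` containing wire `v`. -/
def ordEdge (m ℓ : ℕ) (v : Fin (2^m)) : Fin (2^m) × Fin (2^m) :=
  if v < partnerWire m ℓ v then (v, partnerWire m ℓ v) else (partnerWire m ℓ v, v)

lemma ordEdge_mem {ℓ : ℕ} (hℓm : ℓ ≤ m) (hℓ1 : 1 ≤ ℓ) (v : Fin (2^m)) :
    ordEdge m ℓ v ∈ cccMatching m ℓ := by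
  have hne := partnerWire_ne hℓm hℓ1 v
  have hval := partnerWire_val hℓm hℓ1 v
  rw [ordEdge]
  split_ifs with h
  · exact mem_ccc.mpr ⟨h, by rw [hval, xor_cancel_left]⟩
  · have hpv : partnerWire m ℓ v < v := by
      rcases lt_or_eq_of_le (not_lt.mp h) with h' | h'
      · exact h'
      · exact absurd h' hne
    exact mem_ccc.mpr ⟨hpv, by rw [hval, Nat.xor_comm, xor_cancel_left]⟩

lemma ordEdge_contains {ℓ : ℕ} (v : Fin (2^m)) :
    v = (ordEdge m ℓ v).1 ∨ v = (ordEdge m ℓ v).2 := by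
  rw [ordEdge]; split_ifs <;> simp

lemma balStep_ccc {ℓ : ℕ} (hℓm : ℓ ≤ m) (hℓ1 : 1 ≤ ℓ)
    (ptf : Fin (2^m) × Fin (2^m) → Fin (2^m)) (y : Fin (2^m) → ℤ) (v : Fin (2^m)) :
    balStep (cccMatching m ℓ) ptf y v =
      (y v + y (partnerWire m ℓ v) +
        (if v = ptf (ordEdge m ℓ v) then 1 else 0)) / 2 := by
  have hex : ∃ e ∈ cccMatching m ℓ, v = e.1 ∨ v = e.2 :=
    ⟨ordEdge m ℓ v, ordEdge_mem hℓm hℓ1 v, ordEdge_contains v⟩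
  rw [balStep, dif_pos hex]
  have hch : hex.choose = ordEdge m ℓ v :=
    ccc_unique hex.choose_spec.1 (ordEdge_mem hℓm hℓ1 v) hex.choose_spec.2
      (ordEdge_contains v)
  rw [hch]
  have hsum : y (ordEdge m ℓ v).1 + y (ordEdge m ℓ v).2 = y v + y (partnerWire m ℓ v) := by
    rw [ordEdge]; split_ifs <;> simp [add_comm]
  rw [hsum]
  split_ifs with h
  · rw [Int.fdiv_eq_ediv_of_nonneg _ (by norm_num)]
  · rw [Int.fdiv_eq_ediv_of_nonneg _ (by norm_num), add_zero]

end CCC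


section Cone

variable {m : ℕ}

/-- Input cone: wires agreeing with `v` on all bits `≥ ℓ`. -/
def coneF (m ℓ : ℕ) (v : Fin (2^m)) : Finset (Fin (2^m)) :=
  Finset.univ.filter (fun w => w.val / 2^ℓ = v.val / 2^ℓ)

lemma mem_coneF {ℓ : ℕ} {w v : Fin (2^m)} :
    w ∈ coneF m ℓ v ↔ w.val / 2^ℓ = v.val / 2^ℓ := by simp [coneF]

lemma self_mem_coneF {ℓ : ℕ} {v : Fin (2^m)} : v ∈ coneF m ℓ v := mem_coneF.mpr rfl

lemma coneF_zero (v : Fin (2^m)) : coneF m 0 v = {v} := by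
  ext w
  simp [coneF, Fin.val_inj, Nat.div_one]

lemma coneF_congr {ℓ : ℕ} {v u : Fin (2^m)} (h : v.val / 2^ℓ = u.val / 2^ℓ) :
    coneF m ℓ v = coneF m ℓ u := by
  ext w; rw [mem_coneF, mem_coneF, h]

lemma coneF_union {t : ℕ} {v v' : Fin (2^m)} (hv' : v'.val = v.val ^^^ 2^t) :
    coneF m t v ∪ coneF m t v' = coneF m (t+1) v := by
  ext w
  rw [Finset.mem_union, mem_coneF, mem_coneF, mem_coneF, hv']
  exact (div_succ_eq_iff w.val v.val t).symm

lemma coneF_disj {t : ℕ} {v v' : Fin (2^m)} (hv' : v'.val = v.val ^^^ 2^t) :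
    Disjoint (coneF m t v) (coneF m t v') := by
  rw [Finset.disjoint_left]
  intro w hw hw'
  rw [mem_coneF] at hw hw'
  have h1 : (v'.val) / 2^t = v.val / 2^t ^^^ 1 := by
    rw [hv', xor_div_pow, Nat.div_self (Nat.two_pow_pos t)]
  rw [hw] at hw'
  rw [h1] at hw'
  have : v.val / 2^t ^^^ 2^0 = v.val / 2^t := by simpa using hw'.symm
  exact xor_ne_self _ 0 this

end Cone

section Digits

lemma int_div_decomp (x : ℤ) (t : ℕ) :
    x / 2^t = 2 * (x / 2^(t+1)) + (x % 2^(t+1)) / 2^t := by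
  have h := Int.mul_ediv_add_emod x (2^(t+1))
  have hne : (2:ℤ)^t ≠ 0 := by positivity
  set q := x / 2^(t+1) with hq
  set r := x % 2^(t+1) with hr
  have hx : x = r + 2^t * (2 * q) := by rw [← h]; ring
  calc x / 2^t = (r + 2^t * (2 * q)) / 2^t := by rw [← hx]
  _ = r / 2^t + 2 * q := Int.add_mul_ediv_left r (2*q) hne
  _ = 2 * q + r / 2^t := by ring

lemma two_mul_add_ediv (a c : ℤ) : (c + 2 * a) / 2 = a + c / 2 := by
  rw [Int.add_mul_ediv_left c a (by norm_num : (2:ℤ) ≠ 0)]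
  ring

lemma assemble (s1 s2 S B f1 f2 e : ℤ) (h : s1 + s2 = 2*S + B) :
    (s1 + f1 + (s2 + f2) + e) / 2 = S + (B + f1 + f2 + e) / 2 := by
  have h2 : s1 + f1 + (s2 + f2) + e = (B + f1 + f2 + e) + 2*S := by linarith
  rw [h2, two_mul_add_ediv]

end Digits

section Invariant

variable {m : ℕ} (pt : ℕ → Fin (2^m) × Fin (2^m) → Fin (2^m))

lemma loads_succ (M : ℕ → Finset (Fin (2^m) × Fin (2^m)))
    (ptf : ℕ → Fin (2^m) × Fin (2^m) → Fin (2^m)) (y0 : Fin (2^m) → ℤ) (t : ℕ) :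
    loads M ptf y0 (t+1) = balStep (M (t+1)) (ptf (t+1)) (loads M ptf y0 t) := rfl

lemma loads_struct : ∀ ℓ, ℓ ≤ m → ∀ v : Fin (2^m), ∃ F : (Fin (2^m) → ℤ) → ℤ,
    (∀ x x' : Fin (2^m) → ℤ,
        (∀ w ∈ coneF m ℓ v, x w % 2^ℓ = x' w % 2^ℓ) → F x = F x') ∧
    (∀ x, loads (cccMatching m) pt x ℓ v = (∑ w ∈ coneF m ℓ v, x w / 2^ℓ) + F x) := by
  intro ℓ
  induction ℓ with
  | zero =>
    intro _ v
    refine ⟨fun _ => 0, fun _ _ _ => rfl, fun x => ?_⟩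
    rw [coneF_zero]
    show x v = _
    simp
  | succ ℓ IH =>
    intro hℓ v
    obtain ⟨F1, hF1dep, hF1val⟩ := IH (by omega) v
    set v' := partnerWire m (ℓ+1) v with hv'def
    have hv' : v'.val = v.val ^^^ 2^ℓ := by
      have := partnerWire_val (m := m) (ℓ := ℓ+1) hℓ (by omega) v
      simpa using this
    obtain ⟨F2, hF2dep, hF2val⟩ := IH (by omega) v'
    have hun := coneF_union hv'
    have hdisj := coneF_disj hv'
    have hdvd : (2:ℤ)^ℓ ∣ 2^(ℓ+1) := pow_dvd_pow 2 (Nat.le_succ ℓ)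
    refine ⟨fun x => ((∑ w ∈ coneF m (ℓ+1) v, (x w % 2^(ℓ+1)) / 2^ℓ) + F1 x + F2 x +
        (if v = pt (ℓ+1) (ordEdge m (ℓ+1) v) then 1 else 0)) / 2, ?_, ?_⟩
    · intro x x' hag
      have hagl : ∀ w ∈ coneF m (ℓ+1) v, x w % 2^ℓ = x' w % 2^ℓ := by
        intro w hw
        calc x w % 2^ℓ = (x w % 2^(ℓ+1)) % 2^ℓ := (Int.emod_emod_of_dvd _ hdvd).symm
        _ = (x' w % 2^(ℓ+1)) % 2^ℓ := by rw [hag w hw]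
        _ = x' w % 2^ℓ := Int.emod_emod_of_dvd _ hdvd
      have h1 : F1 x = F1 x' := hF1dep x x'
        (fun w hw => hagl w (hun ▸ Finset.mem_union_left _ hw))
      have h2 : F2 x = F2 x' := hF2dep x x'
        (fun w hw => hagl w (hun ▸ Finset.mem_union_right _ hw))
      have h3 : (∑ w ∈ coneF m (ℓ+1) v, (x w % 2^(ℓ+1)) / 2^ℓ)
          = ∑ w ∈ coneF m (ℓ+1) v, (x' w % 2^(ℓ+1)) / 2^ℓ :=
        Finset.sum_congr rfl fun w hw => by rw [hag w hw]
      simp only [h1, h2, h3]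
    · intro x
      rw [loads_succ, balStep_ccc hℓ (by omega), ← hv'def, hF1val x, hF2val x]
      have hsplit : (∑ w ∈ coneF m ℓ v, x w / 2^ℓ) + (∑ w ∈ coneF m ℓ v', x w / 2^ℓ)
          = 2 * (∑ w ∈ coneF m (ℓ+1) v, x w / 2^(ℓ+1))
            + ∑ w ∈ coneF m (ℓ+1) v, (x w % 2^(ℓ+1)) / 2^ℓ := by
        calc (∑ w ∈ coneF m ℓ v, x w / 2^ℓ) + (∑ w ∈ coneF m ℓ v', x w / 2^ℓ)
            = ∑ w ∈ coneF m (ℓ+1) v, x w / 2^ℓ := by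
              rw [← hun, Finset.sum_union hdisj]
        _ = ∑ w ∈ coneF m (ℓ+1) v, (2 * (x w / 2^(ℓ+1)) + (x w % 2^(ℓ+1)) / 2^ℓ) :=
              Finset.sum_congr rfl fun w _ => int_div_decomp (x w) ℓ
        _ = _ := by rw [Finset.sum_add_distrib, ← Finset.mul_sum]
      exact assemble _ _ _ _ _ _ _ hsplit

end Invariant


section Reach

variable {m : ℕ}

lemma reach_refl : ∀ k ℓ (u : Fin (2^m)), reachWire m k ℓ u u := by
  intro k
  induction k with
  | zero => intro ℓ u; exact rfl
  | succ k IH => intro ℓ u; exact Or.inl (IH (ℓ+1) u)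

lemma reach_iff : ∀ k ℓ, ℓ + k ≤ m → ∀ u i : Fin (2^m),
    reachWire m k ℓ u i ↔
      (u.val % 2^ℓ = i.val % 2^ℓ ∧ u.val / 2^(ℓ+k) = i.val / 2^(ℓ+k)) := by
  intro k
  induction k with
  | zero =>
    intro ℓ h u i
    constructor
    · intro h'
      have : u = i := h'
      subst this
      exact ⟨rfl, rfl⟩
    · rintro ⟨h1, h2⟩
      have dA := Nat.div_add_mod u.val (2^(ℓ+0))
      have dB := Nat.div_add_mod i.val (2^(ℓ+0))
      have h1' : u.val % 2^(ℓ+0) = i.val % 2^(ℓ+0) := h1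
      show u = i
      apply Fin.ext
      rw [← dA, ← dB, h1', h2]
  | succ k IH =>
    intro ℓ h u i
    have hp : (partnerWire m (ℓ+1) u).val = u.val ^^^ 2^ℓ := by
      simpa using partnerWire_val (show ℓ+1 ≤ m by omega) (by omega) u
    have hexp : (ℓ+1) + k = ℓ + (k+1) := by omega
    show (reachWire m k (ℓ+1) u i ∨ reachWire m k (ℓ+1) (partnerWire m (ℓ+1) u) i) ↔ _
    rw [IH (ℓ+1) (by omega) u i, IH (ℓ+1) (by omega) _ i, hp, hexp]
    have hdvd : (2:ℕ)^ℓ ∣ 2^(ℓ+1) := pow_dvd_pow 2 (Nat.le_succ ℓ)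
    constructor
    · rintro (⟨h1, h2⟩ | ⟨h1, h2⟩)
      · refine ⟨?_, h2⟩
        calc u.val % 2^ℓ = (u.val % 2^(ℓ+1)) % 2^ℓ := (Nat.mod_mod_of_dvd _ hdvd).symm
        _ = (i.val % 2^(ℓ+1)) % 2^ℓ := by rw [h1]
        _ = i.val % 2^ℓ := Nat.mod_mod_of_dvd _ hdvd
      · refine ⟨?_, ?_⟩
        · calc u.val % 2^ℓ = (u.val ^^^ 2^ℓ) % 2^ℓ := (xor_low _ ℓ ℓ le_rfl).symm
          _ = ((u.val ^^^ 2^ℓ) % 2^(ℓ+1)) % 2^ℓ := (Nat.mod_mod_of_dvd _ hdvd).symm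
          _ = (i.val % 2^(ℓ+1)) % 2^ℓ := by rw [h1]
          _ = i.val % 2^ℓ := Nat.mod_mod_of_dvd _ hdvd
        · rw [← xor_high u.val ℓ (ℓ+(k+1)) (by omega), h2]
    · rintro ⟨h1, h2⟩
      rcases (mod_succ_split i.val u.val ℓ).mp h1.symm with h' | h'
      · exact Or.inl ⟨h'.symm, h2⟩
      · refine Or.inr ⟨h'.symm, ?_⟩
        rw [xor_high u.val ℓ (ℓ+(k+1)) (by omega), h2]

lemma balAffects_iff {ℓ : ℕ} (hℓ1 : 1 ≤ ℓ) (hℓm : ℓ ≤ m) (e : Fin (2^m) × Fin (2^m))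
    (i : Fin (2^m)) :
    balAffects m ℓ e m i ↔
      (e.1.val % 2^ℓ = i.val % 2^ℓ ∨ e.2.val % 2^ℓ = i.val % 2^ℓ) := by
  unfold balAffects
  rw [reach_iff (m-ℓ) ℓ (by omega) e.1 i, reach_iff (m-ℓ) ℓ (by omega) e.2 i]
  have hdiv : ∀ u : Fin (2^m), u.val / 2^(ℓ+(m-ℓ)) = 0 := fun u =>
    Nat.div_eq_of_lt (by rw [show ℓ+(m-ℓ) = m by omega]; exact u.isLt)
  simp [hdiv]

end Reach

section OddStruct

variable {m : ℕ} (pt : ℕ → Fin (2^m) × Fin (2^m) → Fin (2^m))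

lemma dig_eq (x : ℤ) (t : ℕ) : (x / 2^t) % 2 = (x % 2^(t+1)) / 2^t := by
  have hd := int_div_decomp x t
  have hpos : (0:ℤ) < 2^t := by positivity
  have h0 : 0 ≤ (x % 2^(t+1)) / 2^t :=
    Int.ediv_nonneg (Int.emod_nonneg _ (by positivity)) (by positivity)
  have h2 : (x % 2^(t+1)) / 2^t < 2 := by
    rw [Int.ediv_lt_iff_lt_mul hpos]
    calc x % 2^(t+1) < 2^(t+1) := Int.emod_lt_of_pos _ (by positivity)
    _ = 2 * 2^t := by ring
  rw [hd, add_comm, Int.add_mul_emod_self_left]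
  exact Int.emod_eq_of_lt h0 h2

lemma odd_struct {ℓ : ℕ} (hℓ1 : 1 ≤ ℓ) (hℓm : ℓ ≤ m)
    {e : Fin (2^m) × Fin (2^m)} (he : e ∈ cccMatching m ℓ) :
    ∃ F : (Fin (2^m) → ℤ) → ℤ,
      (∀ x x' : Fin (2^m) → ℤ,
          (∀ w ∈ coneF m ℓ e.1, x w % 2^(ℓ-1) = x' w % 2^(ℓ-1)) → F x = F x') ∧
      ∀ x, (loads (cccMatching m) pt x (ℓ-1) e.1 +
            loads (cccMatching m) pt x (ℓ-1) e.2) % 2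
          = ((∑ w ∈ coneF m ℓ e.1, (x w / 2^(ℓ-1)) % 2) + F x) % 2 := by
  obtain ⟨t, rfl⟩ : ∃ t, ℓ = t + 1 := ⟨ℓ-1, by omega⟩
  simp only [Nat.add_sub_cancel]
  have hv' : e.2.val = e.1.val ^^^ 2^t := by
    have := e2_val he
    simpa using this
  obtain ⟨F1, hF1dep, hF1val⟩ := loads_struct pt t (by omega) e.1
  obtain ⟨F2, hF2dep, hF2val⟩ := loads_struct pt t (by omega) e.2
  have hun := coneF_union hv'
  have hdisj := coneF_disj hv'
  refine ⟨fun x => F1 x + F2 x, ?_, ?_⟩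
  · intro x x' hag
    have h1 := hF1dep x x' (fun w hw => hag w (hun ▸ Finset.mem_union_left _ hw))
    have h2 := hF2dep x x' (fun w hw => hag w (hun ▸ Finset.mem_union_right _ hw))
    simp only [h1, h2]
  · intro x
    rw [hF1val x, hF2val x]
    have hsum : (∑ w ∈ coneF m t e.1, x w / 2^t) + (∑ w ∈ coneF m t e.2, x w / 2^t)
        = ∑ w ∈ coneF m (t+1) e.1, x w / 2^t := by
      rw [← hun, Finset.sum_union hdisj]
    have hterm : ∀ z : ℤ, z / 2^t = 2 * (z / 2^(t+1)) + (z / 2^t) % 2 := by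
      intro z
      rw [dig_eq]
      exact int_div_decomp z t
    have hsplit : ∑ w ∈ coneF m (t+1) e.1, x w / 2^t
        = 2 * (∑ w ∈ coneF m (t+1) e.1, x w / 2^(t+1))
          + ∑ w ∈ coneF m (t+1) e.1, (x w / 2^t) % 2 := by
      calc ∑ w ∈ coneF m (t+1) e.1, x w / 2^t
          = ∑ w ∈ coneF m (t+1) e.1, (2 * (x w / 2^(t+1)) + (x w / 2^t) % 2) :=
            Finset.sum_congr rfl fun w _ => hterm (x w)
      _ = _ := by rw [Finset.sum_add_distrib, ← Finset.mul_sum]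
    have hlin : (∑ w ∈ coneF m t e.1, x w / 2^t) + F1 x
          + ((∑ w ∈ coneF m t e.2, x w / 2^t) + F2 x)
        = ((∑ w ∈ coneF m (t+1) e.1, (x w / 2^t) % 2) + (F1 x + F2 x))
          + 2 * (∑ w ∈ coneF m (t+1) e.1, x w / 2^(t+1)) := by
      linarith [hsum, hsplit]
    rw [hlin, Int.add_mul_emod_self_left]

end OddStruct


section DigitSum

lemma digit_sum (x : ℤ) : ∀ t, x % 2^t = ∑ j ∈ Finset.range t, (x / 2^j % 2) * 2^j := by
  intro t
  induction t with
  | zero => simp [Int.emod_one]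
  | succ t IH =>
    have h1 : x % 2^(t+1) % 2^t = x % 2^t :=
      Int.emod_emod_of_dvd _ (pow_dvd_pow 2 (Nat.le_succ t))
    have h2 := Int.mul_ediv_add_emod (x % 2^(t+1)) (2^t)
    rw [Finset.sum_range_succ, ← IH, dig_eq]
    linarith [h1, h2]

lemma digit_recon {x : ℤ} {t : ℕ} (h0 : 0 ≤ x) (hlt : x < 2^t) :
    x = ∑ j ∈ Finset.range t, (x / 2^j % 2) * 2^j := by
  rw [← digit_sum]
  exact (Int.emod_eq_of_lt h0 hlt).symm

lemma dig01 (x : ℤ) (j : ℕ) : x / 2^j % 2 = 0 ∨ x / 2^j % 2 = 1 := by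
  have h0 : 0 ≤ x / 2^j % 2 := Int.emod_nonneg _ (by norm_num)
  have h1 : x / 2^j % 2 < 2 := Int.emod_lt_of_pos _ (by norm_num)
  omega

end DigitSum

section Cube

variable {m : ℕ}

/-- The finite cube of admissible input vectors. -/
def cubeX (m : ℕ) : Finset (Fin (2^m) → ℤ) :=
  Fintype.piFinset (fun _ => (Finset.range (2^m)).map
    (⟨fun n : ℕ => (n:ℤ), fun a b h => by simpa using h⟩ : ℕ ↪ ℤ))

lemma mem_cubeX {x : Fin (2^m) → ℤ} :
    x ∈ cubeX m ↔ ∀ v, 0 ≤ x v ∧ x v < 2^m := by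
  have hcast : ((2^m : ℕ) : ℤ) = 2^m := by push_cast; ring
  rw [cubeX, Fintype.mem_piFinset]
  apply forall_congr'
  intro v
  simp only [Finset.mem_map, Finset.mem_range, Function.Embedding.coeFn_mk]
  constructor
  · rintro ⟨a, ha, hax⟩
    rw [← hax]
    refine ⟨Int.natCast_nonneg a, ?_⟩
    rw [← hcast]; exact (by exact_mod_cast ha : (a:ℤ) < ((2^m:ℕ):ℤ))
  · rintro ⟨h0, h1⟩
    obtain ⟨a, hxa⟩ := Int.eq_ofNat_of_zero_le h0
    refine ⟨a, ?_, hxa.symm⟩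
    rw [hxa, ← hcast] at h1
    exact_mod_cast h1

lemma card_cubeX : (cubeX m).card = (2^m)^(2^m) := by
  rw [cubeX, Fintype.card_piFinset]
  simp

end Cube

section MeasCount

variable {m : ℕ} {Ω : Type} [MeasurableSpace Ω] (μ : Measure Ω) [IsProbabilityMeasure μ]
  (input : Fin (2^m) → Ω → ℤ)

lemma atom_meas
    (hmeas : ∀ v, Measurable (input v))
    (hindep : iIndepFun input μ)
    (hunif : ∀ v, ∀ k : ℤ, 0 ≤ k → k < 2^m →
      μ {ω | input v ω = k} = ((2^m : ℝ≥0∞))⁻¹)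
    (x : Fin (2^m) → ℤ) (hx : x ∈ cubeX m) :
    μ {ω | ∀ v, input v ω = x v} = ((2^m : ℝ≥0∞))⁻¹ ^ (2^m) := by
  have hset : {ω | ∀ v, input v ω = x v}
      = ⋂ v ∈ (Finset.univ : Finset (Fin (2^m))), input v ⁻¹' {x v} := by
    ext ω; simp [Set.mem_iInter]
  rw [hset]
  rw [(ProbabilityTheory.iIndepFun_iff_measure_inter_preimage_eq_mul).mp hindep
    Finset.univ (sets := fun v => {x v}) (fun v _ => measurableSet_singleton _)]
  have hval : ∀ v, μ (input v ⁻¹' {x v}) = ((2^m : ℝ≥0∞))⁻¹ := by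
    intro v
    have hb := mem_cubeX.mp hx v
    have : input v ⁻¹' {x v} = {ω | input v ω = x v} := by
      ext ω; simp
    rw [this]
    exact hunif v (x v) hb.1 hb.2
  rw [Finset.prod_congr rfl (fun v _ => hval v)]
  simp [Finset.prod_const]

lemma meas_count
    (hmeas : ∀ v, Measurable (input v))
    (hindep : iIndepFun input μ)
    (hrange : ∀ v ω, 0 ≤ input v ω ∧ input v ω < 2^m)
    (hunif : ∀ v, ∀ k : ℤ, 0 ≤ k → k < 2^m →
      μ {ω | input v ω = k} = ((2^m : ℝ≥0∞))⁻¹)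
    (Q : (Fin (2^m) → ℤ) → Prop) [DecidablePred Q] :
    μ {ω | Q (fun v => input v ω)}
      = ((cubeX m).filter Q).card * ((2^m : ℝ≥0∞))⁻¹ ^ (2^m) := by
  have hset : {ω | Q (fun v => input v ω)}
      = ⋃ x ∈ (cubeX m).filter Q, {ω | ∀ v, input v ω = x v} := by
    ext ω
    simp only [Set.mem_setOf_eq, Set.mem_iUnion, Finset.mem_filter, exists_prop]
    constructor
    · intro hQ
      exact ⟨fun v => input v ω, ⟨mem_cubeX.mpr (fun v => hrange v ω), hQ⟩, fun v => rfl⟩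
    · rintro ⟨x, ⟨hx, hQx⟩, hxe⟩
      have : (fun v => input v ω) = x := funext hxe
      rw [this]; exact hQx
  rw [hset, measure_biUnion_finset]
  · rw [Finset.sum_congr rfl (fun x hx => atom_meas μ input hmeas hindep hunif x
      (Finset.mem_filter.mp hx).1)]
    simp [Finset.sum_const, nsmul_eq_mul]
  · intro x hx y hy hxy
    simp only [Function.onFun]
    rw [Set.disjoint_left]
    intro ω hωx hωy
    exact hxy (funext fun v => (hωx v).symm.trans (hωy v))
  · intro x _
    have : {ω | ∀ v, input v ω = x v} = ⋂ v, input v ⁻¹' {x v} := by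
      ext ω; simp [Set.mem_iInter]
    rw [this]
    exact MeasurableSet.iInter (fun v => (hmeas v) (measurableSet_singleton _))

end MeasCount

section Master

variable {Ω : Type} [MeasurableSpace Ω] (μ : Measure Ω) [IsProbabilityMeasure μ]
  {ι : Type} [Fintype ι]

open scoped Classical in
lemma master_key (f : ι → Ω → ℤ) (hf : ∀ b, Measurable (f b))
    (h01 : ∀ b ω, f b ω = 0 ∨ f b ω = 1)
    (hatom : ∀ ε : ι → ℤ, (∀ b, ε b = 0 ∨ ε b = 1) →
      μ (⋂ b, {ω | f b ω = ε b}) = (2:ℝ≥0∞)⁻¹ ^ (Fintype.card ι))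
    (S : Finset ι) (A : ι → Set ℤ) :
    μ (⋂ b ∈ S, f b ⁻¹' A b)
      = ∏ b ∈ S, ((({0,1} : Finset ℤ).filter (· ∈ A b)).card : ℝ≥0∞) * 2⁻¹ := by
  have hmem01 : ∀ (z : ℤ), z = 0 ∨ z = 1 → z ∈ ({0,1} : Finset ℤ) := by
    intro z hz; rcases hz with rfl | rfl <;> simp
  have hdecomp : (⋂ b ∈ S, f b ⁻¹' A b)
      = ⋃ ε ∈ (Fintype.piFinset (fun _ : ι => ({0,1} : Finset ℤ))).filter
          (fun ε => ∀ b ∈ S, ε b ∈ A b), ⋂ b, {ω | f b ω = ε b} := by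
    ext ω
    simp only [Set.mem_iInter, Set.mem_iUnion, Finset.mem_filter, Set.mem_preimage,
      Set.mem_setOf_eq, exists_prop, Fintype.mem_piFinset]
    constructor
    · intro hω
      refine ⟨fun b => f b ω, ⟨fun b => hmem01 _ (h01 b ω), fun b hb => ?_⟩, fun b => rfl⟩
      exact hω b hb
    · rintro ⟨ε, ⟨hε01, hεA⟩, hωε⟩
      intro b hb
      rw [hωε b]
      exact hεA b hb
  rw [hdecomp, measure_biUnion_finset]
  · have hcount : (Fintype.piFinset (fun _ : ι => ({0,1} : Finset ℤ))).filter
          (fun ε => ∀ b ∈ S, ε b ∈ A b)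
        = Fintype.piFinset (fun b : ι =>
            if b ∈ S then ({0,1} : Finset ℤ).filter (· ∈ A b) else ({0,1} : Finset ℤ)) := by
      ext ε
      simp only [Finset.mem_filter, Fintype.mem_piFinset]
      constructor
      · rintro ⟨h1, h2⟩ b
        by_cases hb : b ∈ S
        · simp [hb, Finset.mem_filter, h1 b, h2 b hb]
        · simp [hb, h1 b]
      · intro h
        constructor
        · intro b
          by_cases hb : b ∈ S
          · have := h b; rw [if_pos hb, Finset.mem_filter] at this; exact this.1
          · have := h b; rw [if_neg hb] at this; exact this
        · intro b hb
          have := h b; rw [if_pos hb, Finset.mem_filter] at this; exact this.2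
    have hsum : ∀ ε ∈ (Fintype.piFinset (fun _ : ι => ({0,1} : Finset ℤ))).filter
          (fun ε => ∀ b ∈ S, ε b ∈ A b),
        μ (⋂ b, {ω | f b ω = ε b}) = (2:ℝ≥0∞)⁻¹ ^ (Fintype.card ι) := by
      intro ε hε
      apply hatom
      intro b
      have := (Fintype.mem_piFinset.mp (Finset.mem_filter.mp hε).1) b
      simp at this
      exact this
    have hc2 : (({0,1} : Finset ℤ)).card = 2 := by decide
    rw [Finset.sum_congr rfl hsum, Finset.sum_const, hcount, Fintype.card_piFinset,
      nsmul_eq_mul, Nat.cast_prod]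
    have hcards : ∀ b : ι,
        (((if b ∈ S then ({0,1} : Finset ℤ).filter (· ∈ A b)
            else ({0,1} : Finset ℤ)).card : ℕ) : ℝ≥0∞)
          = if b ∈ S then ((({0,1} : Finset ℤ).filter (· ∈ A b)).card : ℝ≥0∞) else 2 := by
      intro b; split_ifs with hb <;> simp [hc2]
    rw [Finset.prod_congr rfl (fun b _ => hcards b)]
    rw [← Finset.card_univ, ← Finset.prod_const, ← Finset.prod_mul_distrib]
    rw [← Finset.prod_subset (Finset.subset_univ S) (fun b _ hb => by
        rw [if_neg hb]; exact ENNReal.mul_inv_cancel (by norm_num) (by norm_num))]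
    exact Finset.prod_congr rfl (fun b hb => by rw [if_pos hb])
  · intro x hx y hy hxy
    simp only [Function.onFun]
    rw [Set.disjoint_left]
    intro ω hωx hωy
    simp only [Set.mem_iInter, Set.mem_setOf_eq] at hωx hωy
    exact hxy (funext fun b => (hωx b).symm.trans (hωy b))
  · intro ε _
    exact MeasurableSet.iInter (fun b => (hf b) (measurableSet_singleton _))

open scoped Classical in
lemma master_marginal (f : ι → Ω → ℤ) (hf : ∀ b, Measurable (f b))
    (h01 : ∀ b ω, f b ω = 0 ∨ f b ω = 1)
    (hatom : ∀ ε : ι → ℤ, (∀ b, ε b = 0 ∨ ε b = 1) →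
      μ (⋂ b, {ω | f b ω = ε b}) = (2:ℝ≥0∞)⁻¹ ^ (Fintype.card ι))
    (b : ι) (A : Set ℤ) :
    μ (f b ⁻¹' A) = ((({0,1} : Finset ℤ).filter (· ∈ A)).card : ℝ≥0∞) * 2⁻¹ := by
  have h := master_key μ f hf h01 hatom {b} (fun _ => A)
  simpa using h

lemma master_indep (f : ι → Ω → ℤ) (hf : ∀ b, Measurable (f b))
    (h01 : ∀ b ω, f b ω = 0 ∨ f b ω = 1)
    (hatom : ∀ ε : ι → ℤ, (∀ b, ε b = 0 ∨ ε b = 1) →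
      μ (⋂ b, {ω | f b ω = ε b}) = (2:ℝ≥0∞)⁻¹ ^ (Fintype.card ι)) :
    iIndepFun f μ := by
  classical
  rw [ProbabilityTheory.iIndepFun_iff_measure_inter_preimage_eq_mul]
  intro S sets _
  rw [master_key μ f hf h01 hatom S sets]
  exact (Finset.prod_congr rfl (fun b _ =>
    master_marginal μ f hf h01 hatom b (sets b))).symm

end Master


section Balancers

variable {m : ℕ}

/-- The balancers affecting output wire `i`. -/
abbrev Bi (m : ℕ) (i : Fin (2^m)) : Type :=
  {p : ℕ × (Fin (2^m) × Fin (2^m)) //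
    1 ≤ p.1 ∧ p.1 ≤ m ∧ p.2 ∈ cccMatching m p.1 ∧ balAffects m p.1 p.2 m i}

noncomputable instance biFintype (m : ℕ) (i : Fin (2^m)) : Fintype (Bi m i) :=
  Fintype.ofInjective
    (fun b => ((⟨b.val.1, by have h := b.property; omega⟩ : Fin (m+1)), b.val.2))
    (by
      intro b b' h
      apply Subtype.ext
      apply Prod.ext
      · have := congrArg (fun q => (Prod.fst q).val) h
        simpa using this
      · have := congrArg Prod.snd h
        simpa using this)

/-- The representative digit position of a balancer: wire `e.1`, bit `ℓ-1`. -/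
def repP {i : Fin (2^m)} (b : Bi m i) : Fin (2^m) × Fin m :=
  (b.val.2.1, ⟨b.val.1 - 1, by have h := b.property; omega⟩)

lemma bi_inj {i : Fin (2^m)} (b b' : Bi m i) (hl : b.val.1 = b'.val.1)
    (hc : b.val.2.1.val / 2^(b.val.1) = b'.val.2.1.val / 2^(b.val.1)) : b = b' := by
  obtain ⟨⟨ℓ, e⟩, hb⟩ := b
  obtain ⟨⟨ℓ', e'⟩, hb'⟩ := b'
  simp only at hl hc
  subst hl
  obtain ⟨h1, h2, h3, h4⟩ := hb
  obtain ⟨h1', h2', h3', h4'⟩ := hb'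
  rw [balAffects_iff h1 h2] at h4 h4'
  have he2 : e.2.val / 2^ℓ = e.1.val / 2^ℓ := by
    rw [e2_val h3]
    exact xor_high _ _ _ (by omega)
  have he2' : e'.2.val / 2^ℓ = e'.1.val / 2^ℓ := by
    rw [e2_val h3']
    exact xor_high _ _ _ (by omega)
  have hw : ∃ wv : ℕ, (wv = e.1.val ∨ wv = e.2.val) ∧ wv % 2^ℓ = i.val % 2^ℓ ∧
      wv / 2^ℓ = e.1.val / 2^ℓ := by
    rcases h4 with h | h
    · exact ⟨e.1.val, Or.inl rfl, h, rfl⟩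
    · exact ⟨e.2.val, Or.inr rfl, h, he2⟩
  have hw' : ∃ wv : ℕ, (wv = e'.1.val ∨ wv = e'.2.val) ∧ wv % 2^ℓ = i.val % 2^ℓ ∧
      wv / 2^ℓ = e'.1.val / 2^ℓ := by
    rcases h4' with h | h
    · exact ⟨e'.1.val, Or.inl rfl, h, rfl⟩
    · exact ⟨e'.2.val, Or.inr rfl, h, he2'⟩
  obtain ⟨wv, hwe, hwm, hwd⟩ := hw
  obtain ⟨wv', hwe', hwm', hwd'⟩ := hw'
  have hww : wv = wv' := by
    have d1 := Nat.div_add_mod wv (2^ℓ)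
    have d2 := Nat.div_add_mod wv' (2^ℓ)
    rw [hwd, hc, ← hwd'] at d1
    rw [hwm, ← hwm'] at d1
    exact d1.symm.trans d2
  have hlt : wv < 2^m := by
    rcases hwe with rfl | rfl
    · exact e.1.isLt
    · exact e.2.isLt
  have hee : e = e' := by
    apply ccc_unique h3 h3' (v := ⟨wv, hlt⟩)
    · rcases hwe with h | h
      · exact Or.inl (Fin.ext h)
      · exact Or.inr (Fin.ext h)
    · rcases hwe' with h | h
      · exact Or.inl (Fin.ext (hww.trans h))
      · exact Or.inr (Fin.ext (hww.trans h))
  apply Subtype.ext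
  exact Prod.ext rfl hee

lemma repP_inj {i : Fin (2^m)} : Function.Injective (repP (m := m) (i := i)) := by
  intro b b' h
  have h1 : b.val.2.1 = b'.val.2.1 := by
    have := congrArg Prod.fst h
    simpa [repP] using this
  have h2 : b.val.1 - 1 = b'.val.1 - 1 := by
    have := congrArg (fun q => (Prod.snd q).val) h
    simpa [repP] using this
  have hb := b.property
  have hb' := b'.property
  have hl : b.val.1 = b'.val.1 := by omega
  have hm3 : b.val.2 ∈ cccMatching m b.val.1 := hb.2.2.1
  have hm3' : b'.val.2 ∈ cccMatching m b.val.1 := by rw [hl]; exact hb'.2.2.1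
  have hee : b.val.2 = b'.val.2 :=
    ccc_unique hm3 hm3' (v := b.val.2.1) (Or.inl rfl) (Or.inl h1)
  exact Subtype.ext (Prod.ext hl hee)

lemma emod_two_01 (z : ℤ) : z % 2 = 0 ∨ z % 2 = 1 := by omega

end Balancers


section Heart

variable {m : ℕ}

lemma key01 (A B d d' : ℤ) (h : (A + d + B) % 2 = (A + d' + B) % 2)
    (h1 : d = 0 ∨ d = 1) (h2 : d' = 0 ∨ d' = 1) : d = d' := by omega

open scoped Classical in
lemma dig_determined (pt : ℕ → Fin (2^m) × Fin (2^m) → Fin (2^m)) (i : Fin (2^m))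
    {x x' : Fin (2^m) → ℤ} (hx : x ∈ cubeX m) (hx' : x' ∈ cubeX m)
    (hoff : ∀ p : Fin (2^m) × Fin m, (∀ b : Bi m i, repP b ≠ p) →
      x p.1 / 2^(p.2 : ℕ) % 2 = x' p.1 / 2^(p.2 : ℕ) % 2)
    (hodd : ∀ b : Bi m i,
      (loads (cccMatching m) pt x (b.val.1-1) b.val.2.1 +
       loads (cccMatching m) pt x (b.val.1-1) b.val.2.2) % 2
      = (loads (cccMatching m) pt x' (b.val.1-1) b.val.2.1 +
         loads (cccMatching m) pt x' (b.val.1-1) b.val.2.2) % 2) :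
    x = x' := by
  have key : ∀ j, ∀ w : Fin (2^m), j < m → x w / 2^j % 2 = x' w / 2^j % 2 := by
    intro j
    induction j using Nat.strong_induction_on with
    | _ j IH =>
      intro w hj
      by_cases hp : ∀ b : Bi m i, repP b ≠ (w, ⟨j, hj⟩)
      · exact hoff (w, ⟨j, hj⟩) hp
      · push_neg at hp
        obtain ⟨b, hb⟩ := hp
        have hb1 : b.val.2.1 = w := by
          have := congrArg Prod.fst hb
          simpa [repP] using this
        subst hb1
        have hbj : b.val.1 - 1 = j := by
          have := congrArg (fun q => (Prod.snd q).val) hb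
          simpa [repP] using this
        have hprop := b.property
        obtain ⟨F, hFdep, hFval⟩ := odd_struct pt hprop.1 hprop.2.1 hprop.2.2.1
        have hob := hodd b
        rw [hFval x, hFval x'] at hob
        rw [hbj] at hob hFdep
        have hFxx' : F x = F x' := by
          apply hFdep x x'
          intro w' _
          rw [digit_sum (x w') j, digit_sum (x' w') j]
          exact Finset.sum_congr rfl (fun j' hj' => by
            rw [IH j' (Finset.mem_range.mp hj') w' (by
              have := Finset.mem_range.mp hj'; omega)])
        have hwmem : b.val.2.1 ∈ coneF m b.val.1 b.val.2.1 := self_mem_coneF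
        have herase : ∀ w' ∈ (coneF m b.val.1 b.val.2.1).erase b.val.2.1,
            x w' / 2^j % 2 = x' w' / 2^j % 2 := by
          intro w' hw'
          have hne : w' ≠ b.val.2.1 := (Finset.mem_erase.mp hw').1
          have hwc : w' ∈ coneF m b.val.1 b.val.2.1 := (Finset.mem_erase.mp hw').2
          apply hoff (w', ⟨j, hj⟩)
          intro b' hb'
          have hb'1 : b'.val.2.1 = w' := by
            have := congrArg Prod.fst hb'
            simpa [repP] using this
          have hb'j : b'.val.1 - 1 = j := by
            have := congrArg (fun q => (Prod.snd q).val) hb'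
            simpa [repP] using this
          have hl : b'.val.1 = b.val.1 := by
            have h1 := b'.property
            have h2 := b.property
            omega
          have hcc : b'.val.2.1.val / 2^(b'.val.1) = b.val.2.1.val / 2^(b'.val.1) := by
            rw [hb'1, hl]
            exact mem_coneF.mp hwc
          have hbb : b' = b := bi_inj b' b hl hcc
          rw [hbb] at hb'
          have := congrArg Prod.fst (hb.symm.trans hb')
          simp only at this
          exact hne this.symm
        have hS : (∑ w' ∈ (coneF m b.val.1 b.val.2.1).erase b.val.2.1, x w' / 2^j % 2)
            = ∑ w' ∈ (coneF m b.val.1 b.val.2.1).erase b.val.2.1, x' w' / 2^j % 2 :=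
          Finset.sum_congr rfl herase
        rw [← Finset.sum_erase_add (coneF m b.val.1 b.val.2.1)
              (fun w' => x w' / 2^j % 2) hwmem,
            ← Finset.sum_erase_add (coneF m b.val.1 b.val.2.1)
              (fun w' => x' w' / 2^j % 2) hwmem] at hob
        rw [hFxx', hS] at hob
        exact key01 _ _ _ _ hob (dig01 _ j) (dig01 _ j)
  funext v
  have hb := mem_cubeX.mp hx v
  have hb' := mem_cubeX.mp hx' v
  rw [digit_recon hb.1 hb.2, digit_recon hb'.1 hb'.2]
  exact Finset.sum_congr rfl (fun j hj => by
    rw [key j v (Finset.mem_range.mp hj)])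

end Heart


section Count

variable {m : ℕ}

open scoped Classical in
lemma sols_card (pt : ℕ → Fin (2^m) × Fin (2^m) → Fin (2^m)) (i : Fin (2^m))
    (ε : Bi m i → ℤ) (hε : ∀ b, ε b = 0 ∨ ε b = 1) :
    ((((cubeX m).filter (fun x => ∀ b : Bi m i,
        (loads (cccMatching m) pt x (b.val.1-1) b.val.2.1 +
         loads (cccMatching m) pt x (b.val.1-1) b.val.2.2) % 2 = ε b)).card : ℝ≥0∞))
      * ((2^m : ℝ≥0∞))⁻¹ ^ (2^m)
    = 2⁻¹ ^ (Fintype.card (Bi m i)) := by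
  classical
  set N := Fintype.card (Bi m i) with hN
  set offP : Fin (2^m) × Fin m → Prop := fun p => ∀ b : Bi m i, repP b ≠ p with hoffP
  set Afin : Finset (Fin (2^m) × Fin m → ℤ) :=
    Fintype.piFinset (fun p => if offP p then ({0,1} : Finset ℤ) else ({0} : Finset ℤ))
    with hAfin
  set Bfin : Finset (Bi m i → ℤ) := Fintype.piFinset (fun _ => ({0,1} : Finset ℤ))
    with hBfin
  set Φ : (Fin (2^m) → ℤ) → ((Fin (2^m) × Fin m → ℤ) × (Bi m i → ℤ)) := fun x =>
    (fun p => if offP p then x p.1 / 2^(p.2 : ℕ) % 2 else 0,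
     fun b => (loads (cccMatching m) pt x (b.val.1-1) b.val.2.1 +
       loads (cccMatching m) pt x (b.val.1-1) b.val.2.2) % 2) with hΦ
  have hNle : N ≤ 2^m * m := by
    have h := Fintype.card_le_of_injective (repP (m := m) (i := i)) repP_inj
    simpa using h
  obtain ⟨K, hK⟩ : ∃ K, 2^m * m = K + N := ⟨2^m * m - N, by omega⟩
  have hoffcard : (Finset.univ.filter offP).card = K := by
    have himg : Finset.univ.filter offP = (Finset.univ.image (repP (m := m) (i := i)))ᶜ := by
      ext p
      simp [hoffP, Finset.mem_compl, Finset.mem_image, not_exists]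
    rw [himg, Finset.card_compl, Finset.card_image_of_injective _ repP_inj,
      Finset.card_univ, ← hN]
    have hcardP : Fintype.card (Fin (2^m) × Fin m) = 2^m * m := by simp
    omega
  have hAcard : Afin.card = 2^K := by
    rw [hAfin, Fintype.card_piFinset]
    have hterm : ∀ p : Fin (2^m) × Fin m,
        (if offP p then ({0,1} : Finset ℤ) else ({0} : Finset ℤ)).card
          = if offP p then 2 else 1 := by
      intro p; split_ifs <;> decide
    rw [Finset.prod_congr rfl (fun p _ => hterm p), Finset.prod_ite, Finset.prod_const,
      Finset.prod_const, one_pow, mul_one, hoffcard]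
  have hBcard : Bfin.card = 2^N := by
    rw [hBfin, Fintype.card_piFinset]
    simp [hN]
  have hTcard : (Afin ×ˢ Bfin).card = (cubeX m).card := by
    rw [Finset.card_product, hAcard, hBcard, card_cubeX, ← pow_add, ← pow_mul]
    congr 1
    have hK' := hK
    rw [Nat.mul_comm] at hK'
    exact hK'.symm
  have hmapsto : ∀ x ∈ cubeX m, Φ x ∈ Afin ×ˢ Bfin := by
    intro x _
    rw [Finset.mem_product]
    constructor
    · rw [hAfin, Fintype.mem_piFinset]
      intro p
      by_cases hp : offP p
      · simp only [hΦ, if_pos hp]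
        rcases dig01 (x p.1) (p.2 : ℕ) with h | h <;> simp [h]
      · simp [hΦ, if_neg hp]
    · rw [hBfin, Fintype.mem_piFinset]
      intro b
      rcases emod_two_01 (loads (cccMatching m) pt x (b.val.1-1) b.val.2.1 +
        loads (cccMatching m) pt x (b.val.1-1) b.val.2.2) with h | h <;> simp [hΦ, h]
  have hinj : ∀ x ∈ cubeX m, ∀ x' ∈ cubeX m, Φ x = Φ x' → x = x' := by
    intro x hx x' hx' hΦeq
    apply dig_determined pt i hx hx'
    · intro p hp
      have := congrFun (congrArg Prod.fst hΦeq) p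
      simp only [hΦ] at this; rw [if_pos hp, if_pos hp] at this; exact this
    · intro b
      exact congrFun (congrArg Prod.snd hΦeq) b
  have himage : (cubeX m).image Φ = Afin ×ˢ Bfin := by
    apply Finset.eq_of_subset_of_card_le
    · intro t ht
      obtain ⟨x, hx, rfl⟩ := Finset.mem_image.mp ht
      exact hmapsto x hx
    · rw [Finset.card_image_of_injOn (fun x hx x' hx' => hinj x hx x' hx'), hTcard]
  have hεB : ε ∈ Bfin := by
    rw [hBfin, Fintype.mem_piFinset]
    intro b
    rcases hε b with h | h <;> simp [h]
  have hsols : ((cubeX m).filter (fun x => ∀ b : Bi m i,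
      (loads (cccMatching m) pt x (b.val.1-1) b.val.2.1 +
       loads (cccMatching m) pt x (b.val.1-1) b.val.2.2) % 2 = ε b)).card
      = 2^K := by
    rw [← hAcard]
    have hfil : (Afin ×ˢ Bfin).filter (fun t => t.2 = ε) = Afin ×ˢ ({ε} : Finset _) := by
      ext t
      rw [Finset.mem_filter, Finset.mem_product, Finset.mem_product, Finset.mem_singleton]
      constructor
      · rintro ⟨⟨h1, _⟩, h3⟩
        exact ⟨h1, h3⟩
      · rintro ⟨h1, h2⟩
        exact ⟨⟨h1, h2 ▸ hεB⟩, h2⟩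
    have hbij : ((cubeX m).filter (fun x => ∀ b : Bi m i,
        (loads (cccMatching m) pt x (b.val.1-1) b.val.2.1 +
         loads (cccMatching m) pt x (b.val.1-1) b.val.2.2) % 2 = ε b)).card
        = ((Afin ×ˢ Bfin).filter (fun t => t.2 = ε)).card := by
      apply Finset.card_bij (fun x _ => Φ x)
      · intro x hx
        rw [Finset.mem_filter] at hx ⊢
        refine ⟨hmapsto x hx.1, ?_⟩
        funext b
        exact hx.2 b
      · intro x hx x' hx' heq
        exact hinj x (Finset.mem_filter.mp hx).1 x' (Finset.mem_filter.mp hx').1 heq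
      · intro t ht
        rw [Finset.mem_filter] at ht
        have := ht.1
        rw [← himage] at this
        obtain ⟨x, hx, rfl⟩ := Finset.mem_image.mp this
        refine ⟨x, Finset.mem_filter.mpr ⟨hx, fun b => ?_⟩, rfl⟩
        have := congrFun ht.2 b
        exact this
    rw [hbij, hfil, Finset.card_product, Finset.card_singleton, mul_one]
  rw [hsols]
  have hcast : ((2^K : ℕ) : ℝ≥0∞) = (2:ℝ≥0∞)^K := by push_cast; ring
  rw [hcast]
  have h0 : (2:ℝ≥0∞)^K ≠ 0 := pow_ne_zero K (by norm_num)
  have htop : (2:ℝ≥0∞)^K ≠ ⊤ := ENNReal.pow_ne_top (by norm_num)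
  have hpowm : ((2^m : ℝ≥0∞))⁻¹ ^ (2^m) = ((2:ℝ≥0∞) ^ (K + N))⁻¹ := by
    rw [ENNReal.inv_pow, ← pow_mul]
    have hK' := hK
    rw [Nat.mul_comm] at hK'
    rw [hK']
    exact ENNReal.inv_pow.symm
  rw [hpowm, pow_add, ENNReal.mul_inv (Or.inl h0) (Or.inl htop), ← mul_assoc,
    ENNReal.mul_inv_cancel h0 htop, one_mul, ENNReal.inv_pow]

end Count


section Meas

variable {m : ℕ} {Ω : Type} [MeasurableSpace Ω]

lemma loads_measurable (pt : ℕ → Fin (2^m) × Fin (2^m) → Fin (2^m))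
    (input : Fin (2^m) → Ω → ℤ) (hmeas : ∀ v, Measurable (input v)) :
    ∀ t (v : Fin (2^m)),
      Measurable (fun ω => loads (cccMatching m) pt (fun u => input u ω) t v) := by
  intro t
  induction t with
  | zero => exact fun v => hmeas v
  | succ t IH =>
    intro v
    by_cases h : t + 1 ≤ m
    · have heq : (fun ω => loads (cccMatching m) pt (fun u => input u ω) (t+1) v)
          = fun ω => (loads (cccMatching m) pt (fun u => input u ω) t v
              + loads (cccMatching m) pt (fun u => input u ω) t (partnerWire m (t+1) v)
              + (if v = pt (t+1) (ordEdge m (t+1) v) then 1 else 0)) / 2 := by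
        funext ω
        rw [loads_succ, balStep_ccc h (by omega)]
      rw [heq]
      exact Measurable.comp (measurable_from_top (f := fun z : ℤ => z / 2))
        (((IH v).add (IH (partnerWire m (t+1) v))).add measurable_const)
    · have hE : cccMatching m (t+1) = ∅ := by
        ext e
        simp only [Finset.notMem_empty, iff_false]
        intro he
        have h2 := (mem_ccc.mp he).2
        have hxor : e.1.val ^^^ e.2.val < 2^m := Nat.xor_lt_two_pow e.1.isLt e.2.isLt
        have : (2:ℕ)^m ≤ 2^((t+1)-1) := Nat.pow_le_pow_right (by norm_num) (by omega)
        omega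
      have heq : (fun ω => loads (cccMatching m) pt (fun u => input u ω) (t+1) v)
          = fun ω => loads (cccMatching m) pt (fun u => input u ω) t v := by
        funext ω
        rw [loads_succ, balStep, dif_neg]
        rintro ⟨e, he, _⟩
        rw [hE] at he
        exact absurd he (Finset.notMem_empty e)
      rw [heq]
      exact IH v

end Meas

section Assemble

variable {m : ℕ} {Ω : Type} [MeasurableSpace Ω]

lemma odd_hatom (μ : Measure Ω) [IsProbabilityMeasure μ]
    (pt : ℕ → Fin (2^m) × Fin (2^m) → Fin (2^m))
    (input : Fin (2^m) → Ω → ℤ)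
    (hmeas : ∀ v, Measurable (input v))
    (hindep : iIndepFun input μ)
    (hrange : ∀ v ω, 0 ≤ input v ω ∧ input v ω < 2^m)
    (hunif : ∀ v, ∀ k : ℤ, 0 ≤ k → k < 2^m →
      μ {ω | input v ω = k} = ((2^m : ℝ≥0∞))⁻¹)
    (i : Fin (2^m)) (ε : Bi m i → ℤ) (hε : ∀ b, ε b = 0 ∨ ε b = 1) :
    μ (⋂ b : Bi m i, {ω |
      (loads (cccMatching m) pt (fun v => input v ω) (b.val.1 - 1) b.val.2.1 +
       loads (cccMatching m) pt (fun v => input v ω) (b.val.1 - 1) b.val.2.2) % 2 = ε b})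
    = (2:ℝ≥0∞)⁻¹ ^ (Fintype.card (Bi m i)) := by
  classical
  have hset : (⋂ b : Bi m i, {ω |
      (loads (cccMatching m) pt (fun v => input v ω) (b.val.1 - 1) b.val.2.1 +
       loads (cccMatching m) pt (fun v => input v ω) (b.val.1 - 1) b.val.2.2) % 2 = ε b})
      = {ω | (fun x : Fin (2^m) → ℤ => ∀ b : Bi m i,
          (loads (cccMatching m) pt x (b.val.1-1) b.val.2.1 +
           loads (cccMatching m) pt x (b.val.1-1) b.val.2.2) % 2 = ε b)
          (fun v => input v ω)} := by
    ext ω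
    simp only [Set.mem_iInter, Set.mem_setOf_eq]
  rw [hset, meas_count μ input hmeas hindep hrange hunif (fun x : Fin (2^m) → ℤ =>
    ∀ b : Bi m i, (loads (cccMatching m) pt x (b.val.1-1) b.val.2.1 +
      loads (cccMatching m) pt x (b.val.1-1) b.val.2.2) % 2 = ε b)]
  exact sols_card pt i ε hε

theorem stmt8_main
    (hm : 1 ≤ m)
    (pt : ℕ → Fin (2^m) × Fin (2^m) → Fin (2^m))
    (μ : Measure Ω) [IsProbabilityMeasure μ]
    (input : Fin (2^m) → Ω → ℤ)
    (hmeas : ∀ v, Measurable (input v))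
    (hindep : iIndepFun input μ)
    (hrange : ∀ v ω, 0 ≤ input v ω ∧ input v ω < 2^m)
    (hunif : ∀ v, ∀ k : ℤ, 0 ≤ k → k < 2^m →
      μ {ω | input v ω = k} = ((2^m : ℝ≥0∞))⁻¹) :
    (∀ ℓ, 1 ≤ ℓ → ℓ ≤ m → ∀ e ∈ cccMatching m ℓ,
      μ {ω | ¬ (2 : ℤ) ∣
          (loads (cccMatching m) pt (fun v => input v ω) (ℓ - 1) e.1 +
           loads (cccMatching m) pt (fun v => input v ω) (ℓ - 1) e.2)} = 1/2) ∧
    (∀ i : Fin (2^m),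
      iIndepFun
        (fun (b : Bi m i) (ω : Ω) =>
          (loads (cccMatching m) pt (fun v => input v ω) (b.val.1 - 1) b.val.2.1 +
           loads (cccMatching m) pt (fun v => input v ω) (b.val.1 - 1) b.val.2.2) % 2)
        μ) := by
  have hfmeas : ∀ (i : Fin (2^m)) (b : Bi m i),
      Measurable (fun ω =>
        (loads (cccMatching m) pt (fun v => input v ω) (b.val.1 - 1) b.val.2.1 +
         loads (cccMatching m) pt (fun v => input v ω) (b.val.1 - 1) b.val.2.2) % 2) :=
    fun i b => Measurable.comp (measurable_from_top (f := fun z : ℤ => z % 2))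
      (((loads_measurable pt input hmeas _ _)).add (loads_measurable pt input hmeas _ _))
  have hf01 : ∀ (i : Fin (2^m)) (b : Bi m i) (ω : Ω),
      (loads (cccMatching m) pt (fun v => input v ω) (b.val.1 - 1) b.val.2.1 +
       loads (cccMatching m) pt (fun v => input v ω) (b.val.1 - 1) b.val.2.2) % 2 = 0 ∨
      (loads (cccMatching m) pt (fun v => input v ω) (b.val.1 - 1) b.val.2.1 +
       loads (cccMatching m) pt (fun v => input v ω) (b.val.1 - 1) b.val.2.2) % 2 = 1 :=
    fun i b ω => emod_two_01 _
  constructor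
  · intro ℓ hℓ1 hℓm e he
    set i : Fin (2^m) := e.1 with hi
    have hbal : balAffects m ℓ e m i := Or.inl (reach_refl (m - ℓ) ℓ e.1)
    set b0 : Bi m i := ⟨(ℓ, e), hℓ1, hℓm, he, hbal⟩ with hb0
    have hev : {ω | ¬ (2 : ℤ) ∣
          (loads (cccMatching m) pt (fun v => input v ω) (ℓ - 1) e.1 +
           loads (cccMatching m) pt (fun v => input v ω) (ℓ - 1) e.2)}
        = (fun ω => (loads (cccMatching m) pt (fun v => input v ω) (b0.val.1 - 1) b0.val.2.1 +
            loads (cccMatching m) pt (fun v => input v ω) (b0.val.1 - 1) b0.val.2.2) % 2)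
          ⁻¹' {1} := by
      ext ω
      simp only [Set.mem_setOf_eq, Set.mem_preimage, Set.mem_singleton_iff]
      exact Int.two_dvd_ne_zero
    rw [hev, master_marginal μ _ (hfmeas i) (hf01 i)
      (odd_hatom μ pt input hmeas hindep hrange hunif i) b0 {1}]
    simp [Finset.filter_insert, Finset.filter_singleton, Set.mem_singleton_iff, one_div]
  · intro i
    exact master_indep μ _ (hfmeas i) (hf01 i)
      (odd_hatom μ pt input hmeas hindep hrange hunif i)

end Assemble

end Stmt8Aux

/-- In the `CCC` on `n = 2^m` wires with any fixed orientation of the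
balancers and independent inputs uniform on `{0, …, n-1}`, every balancer receives an
odd total input with probability exactly `1/2`; moreover, for every output wire `i`,
the odd-indicators of the balancers affecting `i` are mutually independent. -/
theorem stmt8_odd_half_and_independent
    (m : ℕ) (hm : 1 ≤ m)
    (pt : ℕ → Fin (2^m) × Fin (2^m) → Fin (2^m))
    (hpt : ∀ ℓ, ∀ e ∈ cccMatching m ℓ, pt ℓ e = e.1 ∨ pt ℓ e = e.2)
    {Ω : Type} [MeasurableSpace Ω] (μ : Measure Ω) [IsProbabilityMeasure μ]
    (input : Fin (2^m) → Ω → ℤ)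
    (hmeas : ∀ v, Measurable (input v))
    (hindep : iIndepFun input μ)
    (hrange : ∀ v ω, 0 ≤ input v ω ∧ input v ω < 2^m)
    (hunif : ∀ v, ∀ k : ℤ, 0 ≤ k → k < 2^m →
      μ {ω | input v ω = k} = ((2^m : ℝ≥0∞))⁻¹) :
    (∀ ℓ, 1 ≤ ℓ → ℓ ≤ m → ∀ e ∈ cccMatching m ℓ,
      μ {ω | ¬ (2 : ℤ) ∣
          (loads (cccMatching m) pt (fun v => input v ω) (ℓ - 1) e.1 +
           loads (cccMatching m) pt (fun v => input v ω) (ℓ - 1) e.2)} = 1/2) ∧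
    (∀ i : Fin (2^m),
      iIndepFun
        (fun (b : {p : ℕ × (Fin (2^m) × Fin (2^m)) //
            1 ≤ p.1 ∧ p.1 ≤ m ∧ p.2 ∈ cccMatching m p.1 ∧ balAffects m p.1 p.2 m i})
          (ω : Ω) =>
          (loads (cccMatching m) pt (fun v => input v ω) (b.val.1 - 1) b.val.2.1 +
           loads (cccMatching m) pt (fun v => input v ω) (b.val.1 - 1) b.val.2.2) % 2)
        μ) := by
  exact Stmt8Aux.stmt8_main hm pt μ input hmeas hindep hrange hunif
end

section
/- Consider the CCC_n network with the all-up orientation after an α-perturbation, with arbitrary integer input loads, and let μ be the average input load. For each balancer b let Ψ(b) = 1/2 if b was not perturbed (still points up) and Ψ(b) = −1/2 if it was perturbed, and let Odd(b) be the indicator that b received an odd total input. Then the number of tokens y_1 exiting on the top output wire satisfies the exact identity y_1 = μ + Σ_{ℓ=1}^{log n} 2^{−log n + ℓ} Σ_{b∈B_1(ℓ)} Odd(b)·Ψ(b). -/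
open MeasureTheory ProbabilityTheory
open scoped ENNReal

open BalNet

section Stmt10Aux

open Classical Finset

private lemma two_pow_dvd_iff_bits (k u : ℕ) : 2^k ∣ u ↔ ∀ j < k, u.testBit j = false := by
  constructor
  · rintro ⟨c, rfl⟩ j hj
    rw [Nat.mul_comm, ← Nat.shiftLeft_eq, Nat.testBit_shiftLeft]
    simp [Nat.not_le.mpr hj]
  · intro h
    apply Nat.dvd_of_mod_eq_zero
    apply Nat.eq_of_testBit_eq
    intro j
    rw [Nat.testBit_mod_two_pow, Nat.zero_testBit]
    by_cases hj : j < k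
    · simp [hj, h j hj]
    · simp [hj]

private lemma lt_xor_two_pow {u p : ℕ} (h : u.testBit p = false) : u < u ^^^ 2^p :=
  Nat.lt_of_testBit p h (by simp [h]) (fun j hj => by
    simp [Nat.testBit_two_pow_of_ne (Nat.ne_of_lt hj)])

private lemma xor_two_pow_lt {u p : ℕ} (h : u.testBit p = true) : u ^^^ 2^p < u :=
  Nat.lt_of_testBit p (by simp [h]) h (fun j hj => by
    simp [Nat.testBit_two_pow_of_ne (Nat.ne_of_lt hj)])

private lemma testBit_xor_two_pow_of_ne {u p j : ℕ} (h : p ≠ j) :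
    (u ^^^ 2^p).testBit j = u.testBit j := by
  simp [Nat.testBit_two_pow_of_ne h]

private lemma xor_xor_two_pow (u p : ℕ) : (u ^^^ 2^p) ^^^ 2^p = u := by
  rw [Nat.xor_assoc, Nat.xor_self, Nat.xor_zero]

private lemma xor_self_xor (u p : ℕ) : u ^^^ (u ^^^ 2^p) = 2^p := by
  rw [← Nat.xor_assoc, Nat.xor_self, Nat.zero_xor]

private lemma dvd_pow_succ_iff (p u : ℕ) :
    2^(p+1) ∣ u ↔ 2^p ∣ u ∧ u.testBit p = false := by
  rw [two_pow_dvd_iff_bits, two_pow_dvd_iff_bits]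
  constructor
  · intro h
    exact ⟨fun j hj => h j (by omega), h p (by omega)⟩
  · rintro ⟨h1, h2⟩ j hj
    rcases Nat.lt_or_ge j p with h | h
    · exact h1 j h
    · have hjp : j = p := by omega
      subst hjp; exact h2

private lemma dvd_xor_pow_succ (p u : ℕ) :
    2^(p+1) ∣ (u ^^^ 2^p) ↔ 2^p ∣ u ∧ u.testBit p = true := by
  rw [dvd_pow_succ_iff, two_pow_dvd_iff_bits, two_pow_dvd_iff_bits]
  constructor
  · rintro ⟨h1, h2⟩
    refine ⟨fun j hj => ?_, ?_⟩
    · rw [← testBit_xor_two_pow_of_ne (by omega : p ≠ j)]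
      exact h1 j hj
    · simpa using h2
  · rintro ⟨h1, h2⟩
    refine ⟨fun j hj => ?_, by simp [h2]⟩
    rw [testBit_xor_two_pow_of_ne (by omega : p ≠ j)]
    exact h1 j hj

private lemma partnerWire_val {m p : ℕ} (hp : p < m) (u : Fin (2^m)) :
    (partnerWire m (p+1) u).val = u.val ^^^ 2^p := by
  have h : u.val ^^^ 2^p < 2^m :=
    Nat.xor_lt_two_pow u.isLt (Nat.pow_lt_pow_right one_lt_two hp)
  simp [partnerWire, h]

private lemma mem_ccc {m p : ℕ} {e : Fin (2^m) × Fin (2^m)} :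
    e ∈ cccMatching m (p+1) ↔ e.1 < e.2 ∧ (e.1.val ^^^ e.2.val) = 2^p := by
  simp [cccMatching]

private lemma ccc_snd {m p : ℕ} {e : Fin (2^m) × Fin (2^m)}
    (he : e ∈ cccMatching m (p+1)) :
    e.2.val = e.1.val ^^^ 2^p ∧ e.1.val.testBit p = false ∧ e.2.val.testBit p = true := by
  obtain ⟨hlt, hxor⟩ := mem_ccc.mp he
  have h2 : e.2.val = e.1.val ^^^ 2^p := by
    rw [← hxor, ← Nat.xor_assoc, Nat.xor_self, Nat.zero_xor]
  have hb : e.1.val.testBit p = false := by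
    by_contra h
    have h' : e.1.val.testBit p = true := by simpa using h
    have hlt2 := xor_two_pow_lt h'
    rw [← h2] at hlt2
    exact absurd (Fin.lt_def.mp hlt) (by omega)
  refine ⟨h2, hb, ?_⟩
  rw [h2]; simp [hb]

private lemma ccc_exists {m p : ℕ} (hp : p < m) (v : Fin (2^m)) :
    ∃ e ∈ cccMatching m (p+1), v = e.1 ∨ v = e.2 := by
  have hx : v.val ^^^ 2^p < 2^m :=
    Nat.xor_lt_two_pow v.isLt (Nat.pow_lt_pow_right one_lt_two hp)
  set w : Fin (2^m) := ⟨v.val ^^^ 2^p, hx⟩ with hw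
  by_cases h : v.val.testBit p = false
  · exact ⟨(v, w), mem_ccc.mpr ⟨Fin.lt_def.mpr (lt_xor_two_pow h), xor_self_xor _ _⟩,
      Or.inl rfl⟩
  · have h' : v.val.testBit p = true := by simpa using h
    refine ⟨(w, v), mem_ccc.mpr ⟨Fin.lt_def.mpr (xor_two_pow_lt h'), ?_⟩, Or.inr rfl⟩
    show (v.val ^^^ 2^p) ^^^ v.val = 2^p
    rw [Nat.xor_comm, xor_self_xor]

private lemma ccc_unique {m p : ℕ} {e e' : Fin (2^m) × Fin (2^m)}
    (he : e ∈ cccMatching m (p+1)) (he' : e' ∈ cccMatching m (p+1))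
    {v : Fin (2^m)} (hv : v = e.1 ∨ v = e.2) (hv' : v = e'.1 ∨ v = e'.2) :
    e = e' := by
  obtain ⟨h2, hb1, hb2⟩ := ccc_snd he
  obtain ⟨h2', hb1', hb2'⟩ := ccc_snd he'
  have hfst : e.1 = e'.1 := by
    rcases hv with rfl | rfl
    · rcases hv' with h | h
      · exact h
      · rw [h] at hb1; rw [hb1] at hb2'; exact absurd hb2' (by simp)
    · rcases hv' with h | h
      · rw [← h] at hb1'; rw [hb1'] at hb2; exact absurd hb2 (by simp)
      · apply Fin.ext
        have : e.2.val ^^^ 2^p = e'.2.val ^^^ 2^p := by rw [h]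
        rw [h2, h2', xor_xor_two_pow, xor_xor_two_pow] at this
        exact this
  have hsnd : e.2 = e'.2 := Fin.ext (by rw [h2, h2', hfst])
  exact Prod.ext hfst hsnd

private lemma balStep_eval {m p : ℕ} (hp : p < m) {e : Fin (2^m) × Fin (2^m)}
    (he : e ∈ cccMatching m (p+1)) (pt : Fin (2^m) × Fin (2^m) → Fin (2^m))
    (y : Fin (2^m) → ℤ) (v : Fin (2^m)) (hv : v = e.1 ∨ v = e.2) :
    balStep (cccMatching m (p+1)) pt y v =
      if v = pt e then Int.fdiv (y e.1 + y e.2 + 1) 2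
      else Int.fdiv (y e.1 + y e.2) 2 := by
  have h : ∃ e' ∈ cccMatching m (p+1), v = e'.1 ∨ v = e'.2 := ⟨e, he, hv⟩
  simp only [balStep]
  rw [dif_pos h]
  have hc : h.choose = e := ccc_unique h.choose_spec.1 he h.choose_spec.2 hv
  rw [hc]

private lemma balStep_real {m p : ℕ} (hp : p < m) {e : Fin (2^m) × Fin (2^m)}
    (he : e ∈ cccMatching m (p+1)) (fl : ℕ → Fin (2^m) × Fin (2^m) → Bool)
    (y : Fin (2^m) → ℤ) :
    ((balStep (cccMatching m (p+1)) (ptFrom (fun _ _ => true) fl (p+1)) y e.1 : ℤ) : ℝ) =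
      (((y e.1 : ℤ) : ℝ) + ((y e.2 : ℤ) : ℝ)) / 2 +
        (if ¬ (2:ℤ) ∣ (y e.1 + y e.2) then (1:ℝ) else 0) *
        (if fl (p+1) e then -(1/2 : ℝ) else 1/2) := by
  have hne : e.1 ≠ e.2 := ne_of_lt (mem_ccc.mp he).1
  have key : balStep (cccMatching m (p+1)) (ptFrom (fun _ _ => true) fl (p+1)) y e.1 =
      if fl (p+1) e then Int.fdiv (y e.1 + y e.2) 2
      else Int.fdiv (y e.1 + y e.2 + 1) 2 := by
    rw [balStep_eval hp he _ _ _ (Or.inl rfl)]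
    have hpt : ptFrom (fun _ _ => true) fl (p+1) e = if fl (p+1) e then e.2 else e.1 := by
      simp only [ptFrom]; cases fl (p+1) e <;> simp
    rw [hpt]
    cases fl (p+1) e
    · simp
    · simp [hne]
  rw [key]
  have hfd : ∀ s : ℤ, Int.fdiv s 2 = s / 2 := fun s => Int.fdiv_eq_ediv_of_nonneg s (by norm_num)
  have hcast : ((y e.1 : ℤ):ℝ) + ((y e.2 : ℤ):ℝ) = ((y e.1 + y e.2 : ℤ) : ℝ) := by
    push_cast; ring
  rw [hcast]
  by_cases hd : (2:ℤ) ∣ (y e.1 + y e.2)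
  · obtain ⟨k, hk⟩ := hd
    have hq1 : (y e.1 + y e.2) / 2 = k := by omega
    have hq2 : (y e.1 + y e.2 + 1) / 2 = k := by omega
    rw [if_neg (not_not_intro ⟨k, hk⟩), zero_mul, add_zero]
    cases hfl : fl (p+1) e <;>
      simp only [hfl, if_true, if_false, Bool.false_eq_true, ite_false, ite_true] <;>
      rw [hfd] <;> first
        | (rw [hq1, hk]; push_cast; ring)
        | (rw [hq2, hk]; push_cast; ring)
  · obtain ⟨k, hk⟩ : ∃ k, y e.1 + y e.2 = 2*k+1 := ⟨(y e.1 + y e.2)/2, by omega⟩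
    have hq1 : (y e.1 + y e.2) / 2 = k := by omega
    have hq2 : (y e.1 + y e.2 + 1) / 2 = k + 1 := by omega
    rw [if_pos hd, one_mul]
    cases hfl : fl (p+1) e <;>
      simp only [hfl, if_true, if_false, Bool.false_eq_true, ite_false, ite_true] <;>
      rw [hfd] <;> first
        | (rw [hq1, hk]; push_cast; ring)
        | (rw [hq2, hk]; push_cast; ring)

private def Aset (m k : ℕ) : Finset (Fin (2^m)) :=
  Finset.univ.filter (fun u => 2^k ∣ u.val)

private def Bset (m p : ℕ) : Finset (Fin (2^m) × Fin (2^m)) :=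
  (cccMatching m (p+1)).filter (fun e => 2^(p+1) ∣ e.1.val)

private lemma mem_Bset {m p : ℕ} {e : Fin (2^m) × Fin (2^m)} :
    e ∈ Bset m p ↔ e ∈ cccMatching m (p+1) ∧ 2^(p+1) ∣ e.1.val := by
  simp [Bset]

private lemma mem_Aset {m k : ℕ} {u : Fin (2^m)} : u ∈ Aset m k ↔ 2^k ∣ u.val := by
  simp [Aset]

private lemma sum_B_fst {m p : ℕ} (hp : p < m) (f : Fin (2^m) → ℝ) :
    ∑ e ∈ Bset m p, f e.1 = ∑ u ∈ Aset m (p+1), f u := by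
  refine Finset.sum_nbij' (fun e => e.1) (fun u => (u, partnerWire m (p+1) u)) ?_ ?_ ?_ ?_ ?_
  · intro e he
    exact mem_Aset.mpr (mem_Bset.mp he).2
  · intro u hu
    have hd := mem_Aset.mp hu
    have hb : u.val.testBit p = false := ((dvd_pow_succ_iff p u.val).mp hd).2
    refine mem_Bset.mpr ⟨mem_ccc.mpr ⟨?_, ?_⟩, hd⟩
    · rw [Fin.lt_def, partnerWire_val hp]
      exact lt_xor_two_pow hb
    · rw [partnerWire_val hp]
      exact xor_self_xor _ _
  · intro e he
    obtain ⟨hccc, _⟩ := mem_Bset.mp he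
    obtain ⟨h2, _, _⟩ := ccc_snd hccc
    exact Prod.ext rfl (Fin.ext (by rw [partnerWire_val hp, ← h2]))
  · intro u hu
    rfl
  · intro e he
    rfl

private lemma sum_B_snd {m p : ℕ} (hp : p < m) (f : Fin (2^m) → ℝ) :
    ∑ e ∈ Bset m p, f e.2 =
      ∑ u ∈ Finset.univ.filter
          (fun u : Fin (2^m) => 2^p ∣ u.val ∧ u.val.testBit p = true), f u := by
  refine Finset.sum_nbij' (fun e => e.2) (fun u => (partnerWire m (p+1) u, u)) ?_ ?_ ?_ ?_ ?_
  · intro e he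
    obtain ⟨hccc, hd⟩ := mem_Bset.mp he
    obtain ⟨h2, _, hb2⟩ := ccc_snd hccc
    refine Finset.mem_filter.mpr ⟨Finset.mem_univ _, ?_, hb2⟩
    rw [h2, two_pow_dvd_iff_bits]
    intro j hj
    rw [testBit_xor_two_pow_of_ne (by omega : p ≠ j)]
    exact (two_pow_dvd_iff_bits (p+1) e.1.val).mp hd j (by omega)
  · intro u hu
    obtain ⟨-, hd, hb⟩ := Finset.mem_filter.mp hu
    refine mem_Bset.mpr ⟨mem_ccc.mpr ⟨?_, ?_⟩, ?_⟩
    · rw [Fin.lt_def, partnerWire_val hp]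
      exact xor_two_pow_lt hb
    · show (partnerWire m (p+1) u).val ^^^ u.val = 2^p
      rw [partnerWire_val hp, Nat.xor_comm, xor_self_xor]
    · show 2^(p+1) ∣ (partnerWire m (p+1) u).val
      rw [partnerWire_val hp]
      exact (dvd_xor_pow_succ p u.val).mpr ⟨hd, hb⟩
  · intro e he
    obtain ⟨hccc, _⟩ := mem_Bset.mp he
    obtain ⟨h2, _, _⟩ := ccc_snd hccc
    refine Prod.ext (Fin.ext ?_) rfl
    show (partnerWire m (p+1) e.2).val = e.1.val
    rw [partnerWire_val hp, h2, xor_xor_two_pow]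
  · intro u hu
    rfl
  · intro e he
    rfl

private lemma sum_split {m p : ℕ} (f : Fin (2^m) → ℝ) :
    ∑ u ∈ Aset m p, f u =
      (∑ u ∈ Aset m (p+1), f u) +
      ∑ u ∈ Finset.univ.filter
          (fun u : Fin (2^m) => 2^p ∣ u.val ∧ u.val.testBit p = true), f u := by
  have h1 : (Aset m p).filter (fun u => u.val.testBit p = false) = Aset m (p+1) := by
    ext u
    rw [Finset.mem_filter, mem_Aset, mem_Aset, dvd_pow_succ_iff]
  have h2 : (Aset m p).filter (fun u => ¬ u.val.testBit p = false) =
      Finset.univ.filter (fun u : Fin (2^m) => 2^p ∣ u.val ∧ u.val.testBit p = true) := by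
    ext u
    rw [Finset.mem_filter, mem_Aset, Finset.mem_filter]
    simp [Bool.not_eq_false]
  rw [← Finset.sum_filter_add_sum_filter_not (Aset m p) (fun u => u.val.testBit p = false) f,
    h1, h2]

private lemma reach_top_iff {m : ℕ} :
    ∀ k ℓ, ℓ + k = m → ∀ u : Fin (2^m),
      (reachWire m k ℓ u (topWire m) ↔ 2^ℓ ∣ u.val) := by
  intro k
  induction k with
  | zero =>
    intro ℓ hℓ u
    have hm : ℓ = m := by omega
    subst hm
    simp only [reachWire]
    constructor
    · rintro rfl
      simp [topWire]
    · intro h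
      exact Fin.ext (by simp [topWire, Nat.eq_zero_of_dvd_of_lt h u.isLt])
  | succ k ihk =>
    intro ℓ hℓ u
    have hℓm : ℓ < m := by omega
    simp only [reachWire]
    rw [ihk (ℓ+1) (by omega) u, ihk (ℓ+1) (by omega) _, partnerWire_val hℓm,
      dvd_pow_succ_iff, dvd_xor_pow_succ]
    constructor
    · rintro (⟨h, -⟩ | ⟨h, -⟩) <;> exact h
    · intro h
      cases hb : u.val.testBit ℓ
      · exact Or.inl ⟨h, rfl⟩
      · exact Or.inr ⟨h, rfl⟩

private lemma balAffects_top_iff {m p : ℕ} (hp : p < m) {e : Fin (2^m) × Fin (2^m)}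
    (he : e ∈ cccMatching m (p+1)) :
    balAffects m (p+1) e m (topWire m) ↔ 2^(p+1) ∣ e.1.val := by
  have hk : (p+1) + (m - (p+1)) = m := by omega
  obtain ⟨h2, hb1, hb2⟩ := ccc_snd he
  unfold balAffects
  rw [reach_top_iff _ _ hk, reach_top_iff _ _ hk]
  constructor
  · rintro (h | h)
    · exact h
    · exact absurd ((dvd_pow_succ_iff p e.2.val).mp h).2 (by rw [hb2]; simp)
  · exact Or.inl

private noncomputable def Tsum (m : ℕ) (fl : ℕ → Fin (2^m) × Fin (2^m) → Bool)
    (y0 : Fin (2^m) → ℤ) (ℓ : ℕ) : ℝ :=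
  ∑ e ∈ Bset m (ℓ-1),
    (if ¬ (2 : ℤ) ∣
        (loads (cccMatching m) (ptFrom (fun _ _ => true) fl) y0 (ℓ - 1) e.1 +
         loads (cccMatching m) (ptFrom (fun _ _ => true) fl) y0 (ℓ - 1) e.2)
      then (1 : ℝ) else 0) *
    (if fl ℓ e then -(1/2 : ℝ) else 1/2)

private lemma step_sum (m : ℕ) (fl : ℕ → Fin (2^m) × Fin (2^m) → Bool)
    (y0 : Fin (2^m) → ℤ) {p : ℕ} (hp : p < m) :
    ∑ u ∈ Aset m (p+1),
        ((loads (cccMatching m) (ptFrom (fun _ _ => true) fl) y0 (p+1) u : ℤ) : ℝ)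
      = (1/2) * (∑ u ∈ Aset m p,
          ((loads (cccMatching m) (ptFrom (fun _ _ => true) fl) y0 p u : ℤ) : ℝ))
        + Tsum m fl y0 (p+1) := by
  set L := loads (cccMatching m) (ptFrom (fun _ _ => true) fl) y0 with hLdef
  have hload : L (p+1) = balStep (cccMatching m (p+1))
      (ptFrom (fun _ _ => true) fl (p+1)) (L p) := rfl
  rw [← sum_B_fst hp (fun u => ((L (p+1) u : ℤ) : ℝ))]
  have h1 : ∀ e ∈ Bset m p,
      ((L (p+1) e.1 : ℤ) : ℝ) =
        (((L p e.1 : ℤ) : ℝ) + ((L p e.2 : ℤ) : ℝ)) / 2 +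
        (if ¬ (2:ℤ) ∣ (L p e.1 + L p e.2) then (1:ℝ) else 0) *
        (if fl (p+1) e then -(1/2 : ℝ) else 1/2) := by
    intro e he
    rw [hload]
    exact balStep_real hp (mem_Bset.mp he).1 fl (L p)
  rw [Finset.sum_congr rfl h1, Finset.sum_add_distrib]
  congr 1
  · have hdiv : ∀ e ∈ Bset m p,
        (((L p e.1 : ℤ) : ℝ) + ((L p e.2 : ℤ) : ℝ)) / 2 =
          (1/2 : ℝ) * (((L p e.1 : ℤ) : ℝ) + ((L p e.2 : ℤ) : ℝ)) := by
      intro e _; ring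
    rw [Finset.sum_congr rfl hdiv, ← Finset.mul_sum, Finset.sum_add_distrib,
      sum_B_fst hp (fun u => ((L p u : ℤ) : ℝ)), sum_B_snd hp (fun u => ((L p u : ℤ) : ℝ)),
      ← sum_split (fun u => ((L p u : ℤ) : ℝ))]

private lemma key_sum (m : ℕ) (fl : ℕ → Fin (2^m) × Fin (2^m) → Bool)
    (y0 : Fin (2^m) → ℤ) :
    ∀ t, t ≤ m →
      ∑ u ∈ Aset m t,
          ((loads (cccMatching m) (ptFrom (fun _ _ => true) fl) y0 t u : ℤ) : ℝ)
        = (∑ v, ((y0 v : ℤ) : ℝ)) / 2^t +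
          ∑ ℓ ∈ Finset.Icc 1 t, (2 : ℝ)^ℓ / 2^t * Tsum m fl y0 ℓ := by
  intro t
  induction t with
  | zero =>
    intro _
    have hA : Aset m 0 = Finset.univ := by
      ext u; simp [mem_Aset]
    simp [hA, loads]
  | succ p ih =>
    intro hpm
    have hp : p < m := hpm
    rw [step_sum m fl y0 hp, ih (le_of_lt hp),
      Finset.sum_Icc_succ_top (by omega : 1 ≤ p + 1)]
    have hterm : ∀ ℓ ∈ Finset.Icc 1 p,
        (1/2 : ℝ) * ((2 : ℝ)^ℓ / 2^p * Tsum m fl y0 ℓ) =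
          (2 : ℝ)^ℓ / 2^(p+1) * Tsum m fl y0 ℓ := by
      intro ℓ _
      rw [pow_succ]; ring
    rw [mul_add, Finset.mul_sum, Finset.sum_congr rfl hterm]
    have hpow : ((2:ℝ)^(p+1)) ≠ 0 := by positivity
    rw [pow_succ]
    field_simp
    ring

end Stmt10Aux


open Classical in
/-- Backward unfolding for the `CCC` with the all-up initial
orientation and realized flips `fl`: the load on the top output wire equals the
average input load plus `Σ_ℓ 2^(ℓ - log n) Σ_{b ∈ B_1(ℓ)} Odd(b) Ψ(b)`,
where `Ψ(b) = 1/2` if `b` is not flipped and `-1/2` otherwise. -/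
theorem stmt10_top_wire_unfolding
    (m : ℕ) (hm : 1 ≤ m)
    (fl : ℕ → Fin (2^m) × Fin (2^m) → Bool)
    (y0 : Fin (2^m) → ℤ) :
    ((loads (cccMatching m) (ptFrom (fun _ _ => true) fl) y0 m (topWire m) : ℝ)) =
      (∑ v, (y0 v : ℝ)) / 2^m +
      ∑ ℓ ∈ Finset.Icc 1 m, (2 : ℝ)^ℓ / 2^m *
        ∑ e ∈ (cccMatching m ℓ).filter (fun e => balAffects m ℓ e m (topWire m)),
          (if ¬ (2 : ℤ) ∣
              (loads (cccMatching m) (ptFrom (fun _ _ => true) fl) y0 (ℓ - 1) e.1 +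
               loads (cccMatching m) (ptFrom (fun _ _ => true) fl) y0 (ℓ - 1) e.2)
            then (1 : ℝ) else 0) *
          (if fl ℓ e then -(1/2 : ℝ) else 1/2) := by
  have hkey := key_sum m fl y0 m le_rfl
  have hA : Aset m m = {topWire m} := by
    ext u
    rw [mem_Aset, Finset.mem_singleton]
    constructor
    · intro h
      exact Fin.ext (by simp [topWire, Nat.eq_zero_of_dvd_of_lt h u.isLt])
    · rintro rfl
      simp [topWire]
  rw [hA, Finset.sum_singleton] at hkey
  rw [hkey]
  congr 1
  apply Finset.sum_congr rfl
  intro ℓ hℓ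
  obtain ⟨hℓ1, hℓm⟩ := Finset.mem_Icc.mp hℓ
  obtain ⟨p, rfl⟩ : ∃ p, ℓ = p + 1 := ⟨ℓ - 1, by omega⟩
  have hp : p < m := by omega
  congr 1
  have hset : (cccMatching m (p+1)).filter
      (fun e => balAffects m (p+1) e m (topWire m)) = Bset m p := by
    ext e
    rw [Finset.mem_filter, mem_Bset]
    constructor
    · rintro ⟨h1, h2⟩
      exact ⟨h1, (balAffects_top_iff hp h1).mp h2⟩
    · rintro ⟨h1, h2⟩
      exact ⟨h1, (balAffects_top_iff hp h1).mpr h2⟩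
  exact (Finset.sum_congr hset (fun _ _ => rfl)).symm
end

section
/- Let n = 2^m, let P^(ℓ) be the layer matrices of the CCC_n, and write P^{[i,j]} = P^(i) P^(i+1) ⋯ P^(j). Set t2 = log n and t1 = log n − log log n. Then for every wire w, (log n)·Σ_{i=1}^{t1} Σ_{(u,v)∈M^(i)} ( P^{[i+1,t2]}_{u,w} − P^{[i+1,t2]}_{v,w} )^2 ≤ 32, where M^(i) is the set of balancers (matched pairs) of layer i; equivalently the quantity Λ1 of the general upper bound is O(1) for the CCC_n. -/
open MeasureTheory ProbabilityTheory
open scoped ENNReal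

open BalNet

namespace CCCaux

lemma mod_two_pow_eq_iff (a b n : ℕ) :
    a % 2^n = b % 2^n ↔ ∀ j, j < n → a.testBit j = b.testBit j := by
  constructor
  · intro h j hj
    have := congrArg (fun x => Nat.testBit x j) h
    simpa [Nat.testBit_mod_two_pow, hj] using this
  · intro h
    apply Nat.eq_of_testBit_eq
    intro i
    simp only [Nat.testBit_mod_two_pow]
    by_cases hi : i < n
    · simp [hi, h i hi]
    · simp [hi]

lemma testBit_xor_pow (u j i : ℕ) :
    (u ^^^ 2^j).testBit i = if i = j then !(u.testBit i) else u.testBit i := by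
  rw [Nat.testBit_xor, Nat.testBit_two_pow]
  by_cases h : i = j
  · simp [h]
  · simp [h, Ne.symm h, Bool.xor_false]

lemma xor_pow_mod (u j : ℕ) : (u ^^^ 2^j) % 2^j = u % 2^j := by
  rw [mod_two_pow_eq_iff]
  intro i hi
  rw [testBit_xor_pow]
  simp [Nat.ne_of_lt hi]

lemma xor_pow_mod_ne (u j : ℕ) : (u ^^^ 2^j) % 2^(j+1) ≠ u % 2^(j+1) := by
  intro h
  have := (mod_two_pow_eq_iff _ _ _).1 h j (Nat.lt_succ_self j)
  rw [testBit_xor_pow] at this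
  simp at this

lemma xor_cancel_nat (a b : ℕ) : a ^^^ (a ^^^ b) = b := by
  rw [← Nat.xor_assoc, Nat.xor_self, Nat.zero_xor]

lemma mod_succ_or {u w j : ℕ} (h : u % 2^j = w % 2^j) :
    u % 2^(j+1) = w % 2^(j+1) ∨ (u ^^^ 2^j) % 2^(j+1) = w % 2^(j+1) := by
  have hlow := (mod_two_pow_eq_iff u w j).1 h
  by_cases hb : u.testBit j = w.testBit j
  · left
    rw [mod_two_pow_eq_iff]
    intro i hi
    rcases Nat.lt_succ_iff_lt_or_eq.1 hi with h' | rfl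
    · exact hlow i h'
    · exact hb
  · right
    rw [mod_two_pow_eq_iff]
    intro i hi
    rw [testBit_xor_pow]
    rcases Nat.lt_succ_iff_lt_or_eq.1 hi with h' | rfl
    · simp [Nat.ne_of_lt h', hlow i h']
    · simp only [if_pos rfl]
      cases hu : u.testBit i <;> cases hw : w.testBit i <;> simp_all

/-- The explicit form of the partial products: entries `2^j/2^m` on pairs
agreeing mod `2^j`. -/
noncomputable def Qmat (m j : ℕ) : Matrix (Fin (2^m)) (Fin (2^m)) ℝ :=
  Matrix.of fun u v => if u.val % 2^j = v.val % 2^j then (2^j : ℝ)/2^m else 0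

lemma ccc_mem_iff {m k : ℕ} {e : Fin (2^m) × Fin (2^m)} :
    e ∈ cccMatching m k ↔ e.1 < e.2 ∧ (e.1.val ^^^ e.2.val) = 2^(k-1) := by
  simp [cccMatching]

lemma balMatrix_ccc {m k : ℕ} (h1 : 1 ≤ k) (h2 : k ≤ m) (u v : Fin (2^m)) :
    balMatrix (cccMatching m k) u v
      = if v.val = u.val ^^^ 2^(k-1) ∨ v = u then 1/2 else 0 := by
  have hplt : (2:ℕ)^(k-1) < 2^m := Nat.pow_lt_pow_right one_lt_two (by omega)
  have hpval : u.val ^^^ 2^(k-1) < 2^m := Nat.xor_lt_two_pow u.isLt hplt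
  set p : Fin (2^m) := ⟨u.val ^^^ 2^(k-1), hpval⟩ with hp
  have hpu : p ≠ u := by
    refine Fin.ne_of_val_ne ?_
    intro h
    have h' : u.val ^^^ 2^(k-1) = u.val := h
    exact xor_pow_mod_ne u.val (k-1) (by rw [h'])
  have hxor : u.val ^^^ p.val = 2^(k-1) := xor_cancel_nat _ _
  by_cases huv : u = v
  · subst huv
    have hex : ∃ e ∈ cccMatching m k, u = e.1 ∨ u = e.2 := by
      rcases lt_trichotomy u p with hlt | heq | hgt
      · exact ⟨(u, p), ccc_mem_iff.2 ⟨hlt, hxor⟩, Or.inl rfl⟩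
      · exact absurd heq.symm hpu
      · exact ⟨(p, u), ccc_mem_iff.2 ⟨hgt, by rw [Nat.xor_comm]; exact hxor⟩, Or.inr rfl⟩
    have hcondpos : (u.val = u.val ^^^ 2^(k-1) ∨ u = u) := Or.inr rfl
    simp only [balMatrix, Matrix.of_apply]
    simp [hex]
  · have huv' : ¬ (u = v) := huv
    simp only [balMatrix, Matrix.of_apply, if_neg huv']
    by_cases hcond : v.val = u.val ^^^ 2^(k-1)
    · rcases lt_trichotomy u v with hlt | heq | hgt
      · rw [if_pos (Or.inl (ccc_mem_iff.2 ⟨hlt, by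
            rw [hcond]; exact xor_cancel_nat _ _⟩)), if_pos (Or.inl hcond)]
      · exact absurd heq huv
      · rw [if_pos (Or.inr (ccc_mem_iff.2 ⟨hgt, by
            rw [Nat.xor_comm, hcond]; exact xor_cancel_nat _ _⟩)), if_pos (Or.inl hcond)]
    · have hnot : ¬ ((u,v) ∈ cccMatching m k ∨ (v,u) ∈ cccMatching m k) := by
        rintro (hmem | hmem)
        · have h3 : u.val ^^^ v.val = 2^(k-1) := (ccc_mem_iff.1 hmem).2
          exact hcond (by rw [← h3]; exact (xor_cancel_nat _ _).symm)
        · have h3 : u.val ^^^ v.val = 2^(k-1) := by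
            rw [Nat.xor_comm]; exact (ccc_mem_iff.1 hmem).2
          exact hcond (by rw [← h3]; exact (xor_cancel_nat _ _).symm)
      have hnot2 : ¬ (v.val = u.val ^^^ 2^(k-1) ∨ v = u) := by
        rintro (h | h)
        · exact hcond h
        · exact huv h.symm
      rw [if_neg hnot, if_neg hnot2]

lemma step_mul {m j : ℕ} (hj : j + 1 ≤ m) :
    balMatrix (cccMatching m (j+1)) * Qmat m (j+1) = Qmat m j := by
  ext u w
  rw [Matrix.mul_apply]
  have hplt : (2:ℕ)^j < 2^m := Nat.pow_lt_pow_right one_lt_two (by omega)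
  have hpval : u.val ^^^ 2^j < 2^m := Nat.xor_lt_two_pow u.isLt hplt
  set p : Fin (2^m) := ⟨u.val ^^^ 2^j, hpval⟩ with hp
  have hpu : p ≠ u := by
    refine Fin.ne_of_val_ne ?_
    intro h
    have h' : u.val ^^^ 2^j = u.val := h
    exact xor_pow_mod_ne u.val j (by rw [h'])
  have hentry : ∀ v : Fin (2^m),
      balMatrix (cccMatching m (j+1)) u v * Qmat m (j+1) v w
        = (if v = u then (1/2 : ℝ) * Qmat m (j+1) u w else 0)
          + (if v = p then (1/2 : ℝ) * Qmat m (j+1) p w else 0) := by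
    intro v
    rw [balMatrix_ccc (by omega) hj, Nat.add_sub_cancel]
    by_cases hv1 : v = u
    · subst hv1
      rw [if_pos (Or.inr rfl), if_pos rfl, if_neg (fun h => hpu h.symm)]
      ring
    · by_cases hv2 : v = p
      · subst hv2
        rw [if_pos (Or.inl rfl), if_neg hv1, if_pos rfl]
        ring
      · rw [if_neg ?_, if_neg hv1, if_neg hv2]
        · ring
        · rintro (h | h)
          · exact hv2 (Fin.ext h)
          · exact hv1 h
  rw [Finset.sum_congr rfl (fun v _ => hentry v), Finset.sum_add_distrib,
    Finset.sum_ite_eq' Finset.univ u, Finset.sum_ite_eq' Finset.univ p]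
  simp only [Finset.mem_univ, if_pos]
  have hpmod : p.val % 2^j = u.val % 2^j := xor_pow_mod u.val j
  have hpne : p.val % 2^(j+1) ≠ u.val % 2^(j+1) := xor_pow_mod_ne u.val j
  simp only [Qmat, Matrix.of_apply]
  by_cases hc : u.val % 2^j = w.val % 2^j
  · rw [if_pos hc]
    rcases mod_succ_or hc with h | h
    · rw [if_pos h, if_neg (show ¬ ((u.val ^^^ 2^j) % 2^(j+1) = w.val % 2^(j+1)) from
        fun hh => hpne (hh.trans h.symm))]
      rw [pow_succ]; ring
    · rw [if_pos h, if_neg (show ¬ (u.val % 2^(j+1) = w.val % 2^(j+1)) from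
        fun hh => hpne (h.trans hh.symm))]
      rw [pow_succ]; ring
  · rw [if_neg hc]
    have hdvd : (2:ℕ)^j ∣ 2^(j+1) := pow_dvd_pow 2 (Nat.le_succ j)
    have h1 : ¬ (u.val % 2^(j+1) = w.val % 2^(j+1)) := by
      intro h
      exact hc (by rw [← Nat.mod_mod_of_dvd u.val hdvd, ← Nat.mod_mod_of_dvd w.val hdvd, h])
    have h2 : ¬ (p.val % 2^(j+1) = w.val % 2^(j+1)) := by
      intro h
      have : p.val % 2^j = w.val % 2^j := by
        rw [← Nat.mod_mod_of_dvd p.val hdvd, ← Nat.mod_mod_of_dvd w.val hdvd, h]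
      exact hc (by rw [← hpmod]; exact this)
    rw [if_neg h1, if_neg h2]
    ring

lemma matProd_empty {n : ℕ} (P : ℕ → Matrix (Fin n) (Fin n) ℝ) (j : ℕ) :
    matProd P (j+1) j = 1 := by
  simp [matProd]

lemma matProd_cons {n : ℕ} (P : ℕ → Matrix (Fin n) (Fin n) ℝ) {i j : ℕ} (h : i ≤ j) :
    matProd P i j = P i * matProd P (i+1) j := by
  unfold matProd
  have h1 : j + 1 - i = (j - i) + 1 := by omega
  have h2 : j + 1 - (i+1) = j - i := by omega
  rw [h1, h2, List.range'_succ]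
  simp

lemma matProd_eq_Q (m : ℕ) : ∀ d, d ≤ m →
    matProd (fun j => balMatrix (cccMatching m j)) (m - d + 1) m = Qmat m (m - d) := by
  intro d
  induction d with
  | zero =>
    intro _
    rw [Nat.sub_zero, matProd_empty]
    ext u v
    simp only [Qmat, Matrix.of_apply, Matrix.one_apply]
    rw [Nat.mod_eq_of_lt u.isLt, Nat.mod_eq_of_lt v.isLt]
    by_cases h : u = v
    · subst h
      rw [if_pos rfl, if_pos rfl]
      have h2 : ((2:ℝ)^m) ≠ 0 := by positivity
      exact (div_self h2).symm
    · rw [if_neg (fun hh => h (Fin.ext hh)), if_neg h]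
  | succ d ih =>
    intro hd
    have hd' : d ≤ m := by omega
    rw [matProd_cons _ (show m - (d+1) + 1 ≤ m by omega)]
    have e1 : m - (d+1) + 1 + 1 = m - d + 1 := by omega
    rw [e1, ih hd']
    have e2 : m - d = (m - (d+1)) + 1 := by omega
    rw [e2]
    exact step_mul (by omega)

lemma matProd_Q {m i : ℕ} (h1 : 1 ≤ i) (h2 : i ≤ m) :
    matProd (fun j => balMatrix (cccMatching m j)) (i+1) m = Qmat m i := by
  have := matProd_eq_Q m (m - i) (by omega)
  rwa [show m - (m - i) = i by omega] at this

lemma card_mod_eq (m j : ℕ) (hj : j ≤ m) (w : Fin (2^m)) :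
    (Finset.univ.filter (fun u : Fin (2^m) => u.val % 2^j = w.val % 2^j)).card
      = 2^(m-j) := by
  have h2 : (0:ℕ) < 2^j := Nat.pow_pos (by norm_num)
  have hsplit : (2:ℕ)^(m-j) * 2^j = 2^m := by rw [← pow_add]; congr 1; omega
  rw [← Fintype.card_fin (2^(m-j)), ← Finset.card_univ]
  apply Finset.card_nbij' (fun u => ⟨u.val / 2^j, by
      rw [Nat.div_lt_iff_lt_mul h2, hsplit]; exact u.isLt⟩)
    (fun q => ⟨w.val % 2^j + 2^j * q.val, by
      have hw : w.val % 2^j < 2^j := Nat.mod_lt _ h2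
      have hq : q.val + 1 ≤ 2^(m-j) := q.isLt
      have hmul : 2^j * (q.val + 1) ≤ 2^j * 2^(m-j) := Nat.mul_le_mul_left _ hq
      have hmm : (2:ℕ)^j * 2^(m-j) = 2^m := by rw [← pow_add]; congr 1; omega
      have hexp : 2^j * (q.val + 1) = 2^j * q.val + 2^j := by ring
      omega⟩)
  · intro a _; exact Finset.mem_univ _
  · intro q _
    simp only [Finset.coe_filter, Finset.mem_filter, Finset.mem_univ, true_and, Set.mem_setOf_eq]
    rw [Nat.add_mul_mod_self_left, Nat.mod_mod_of_dvd _ dvd_rfl]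
  · intro u hu
    simp only [Finset.coe_filter, Finset.mem_filter, Finset.mem_univ, true_and, Set.mem_setOf_eq] at hu
    apply Fin.ext
    simp only []
    rw [← hu, Nat.mod_add_div]
  · intro q _
    apply Fin.ext
    simp only []
    rw [Nat.add_mul_div_left _ _ h2, Nat.div_eq_of_lt (Nat.mod_lt _ h2), Nat.zero_add]

lemma sum_pow_le (t : ℕ) : ∑ i ∈ Finset.Icc 1 t, 2^(i+1) ≤ 2^(t+2) := by
  induction t with
  | zero => simp
  | succ t ih =>
    rw [Finset.sum_Icc_succ_top (by omega)]
    have h : (2:ℕ)^(t+1+2) = 2*2^(t+2) := by ring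
    have h2 : (2:ℕ)^(t+1+1) = 2^(t+2) := by ring_nf
    omega

end CCCaux

open CCCaux in
/-- For the `CCC` on `n = 2^m` wires, with `t2 = log n = m` and
`t1 = log n - log log n = m - ⌊log₂ m⌋`, the quantity `Λ1²/… ` of the general upper
bound satisfies, for every wire `w`,
`(log n) Σ_{i=1}^{t1} Σ_{(u,v) ∈ M^(i)} (P^{[i+1,t2]}_{u,w} - P^{[i+1,t2]}_{v,w})² ≤ 32`. -/
theorem stmt17_ccc_lambda1_bound
    (m : ℕ) (hm : 1 ≤ m) (w : Fin (2^m)) :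
    (m : ℝ) * ∑ i ∈ Finset.Icc 1 (m - Nat.log 2 m), ∑ e ∈ cccMatching m i,
      ((matProd (fun j => balMatrix (cccMatching m j)) (i+1) m) e.1 w -
       (matProd (fun j => balMatrix (cccMatching m j)) (i+1) m) e.2 w) ^ 2 ≤ 32 := by
  classical
  have hlog : Nat.log 2 m ≤ m := Nat.log_le_self 2 m
  set t1 := m - Nat.log 2 m with ht1
  have h2m : (0:ℝ) < 2^m := by positivity
  -- per-layer bound
  have inner : ∀ i ∈ Finset.Icc 1 t1,
      (∑ e ∈ cccMatching m i,
        ((matProd (fun j => balMatrix (cccMatching m j)) (i+1) m) e.1 w -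
         (matProd (fun j => balMatrix (cccMatching m j)) (i+1) m) e.2 w) ^ 2)
        ≤ (2:ℝ)^(i+1) / 2^m := by
    intro i hi
    obtain ⟨hi1, hi2⟩ := Finset.mem_Icc.1 hi
    have him : i ≤ m := le_trans hi2 (by omega)
    rw [matProd_Q hi1 him]
    set c : ℝ := (2:ℝ)^i / 2^m with hc
    have hc0 : 0 ≤ c := by positivity
    have hterm : ∀ e ∈ cccMatching m i,
        (Qmat m i e.1 w - Qmat m i e.2 w)^2
          ≤ if e.1.val % 2^(i-1) = w.val % 2^(i-1) then c^2 else 0 := by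
      intro e he
      obtain ⟨hlt, hxor⟩ := ccc_mem_iff.1 he
      have he2 : e.2.val = e.1.val ^^^ 2^(i-1) := by
        rw [← hxor]; exact (xor_cancel_nat _ _).symm
      have hdvd : (2:ℕ)^(i-1) ∣ 2^i := pow_dvd_pow 2 (by omega)
      by_cases hcond : e.1.val % 2^(i-1) = w.val % 2^(i-1)
      · rw [if_pos hcond]
        have hQ : ∀ x : Fin (2^m), Qmat m i x w = 0 ∨ Qmat m i x w = c := by
          intro x
          simp only [Qmat, Matrix.of_apply]
          by_cases h : x.val % 2^i = w.val % 2^i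
          · right; rw [if_pos h]
          · left; rw [if_neg h]
        rcases hQ e.1 with h1 | h1 <;> rcases hQ e.2 with h2 | h2 <;>
          rw [h1, h2] <;> nlinarith [sq_nonneg c]
      · rw [if_neg hcond]
        have h1 : Qmat m i e.1 w = 0 := by
          simp only [Qmat, Matrix.of_apply]
          rw [if_neg]
          intro h
          exact hcond (by
            rw [← Nat.mod_mod_of_dvd e.1.val hdvd, ← Nat.mod_mod_of_dvd w.val hdvd, h])
        have h2 : Qmat m i e.2 w = 0 := by
          simp only [Qmat, Matrix.of_apply]
          rw [if_neg]
          intro h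
          have hh : e.2.val % 2^(i-1) = w.val % 2^(i-1) := by
            rw [← Nat.mod_mod_of_dvd e.2.val hdvd, ← Nat.mod_mod_of_dvd w.val hdvd, h]
          have hh2 : e.2.val % 2^(i-1) = e.1.val % 2^(i-1) := by
            rw [he2]; exact xor_pow_mod _ _
          exact hcond (hh2.symm.trans hh)
        rw [h1, h2]
        simp
    have hstep1 := Finset.sum_le_sum hterm
    have hcard : ((cccMatching m i).filter
        (fun e => e.1.val % 2^(i-1) = w.val % 2^(i-1))).card ≤ 2^(m-(i-1)) := by
      rw [← card_mod_eq m (i-1) (by omega) w]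
      apply Finset.card_le_card_of_injOn (fun e => e.1)
      · intro e he
        simp only [Finset.coe_filter, Finset.mem_filter, Set.mem_setOf_eq] at he ⊢
        exact ⟨Finset.mem_univ _, he.2⟩
      · intro e he e' he' hee
        simp only [Finset.coe_filter, Set.mem_setOf_eq] at he he'
        obtain ⟨hlt, hxor⟩ := ccc_mem_iff.1 he.1
        obtain ⟨hlt', hxor'⟩ := ccc_mem_iff.1 he'.1
        have h1 : e.1 = e'.1 := hee
        have h2 : e.2.val = e'.2.val := by
          have a1 : e.2.val = e.1.val ^^^ 2^(i-1) := by
            rw [← hxor]; exact (xor_cancel_nat _ _).symm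
          have a2 : e'.2.val = e'.1.val ^^^ 2^(i-1) := by
            rw [← hxor']; exact (xor_cancel_nat _ _).symm
          rw [a1, a2, h1]
        exact Prod.ext h1 (Fin.ext h2)
    calc (∑ e ∈ cccMatching m i, (Qmat m i e.1 w - Qmat m i e.2 w)^2)
        ≤ ∑ e ∈ cccMatching m i,
            (if e.1.val % 2^(i-1) = w.val % 2^(i-1) then c^2 else 0) := hstep1
      _ = (((cccMatching m i).filter
            (fun e => e.1.val % 2^(i-1) = w.val % 2^(i-1))).card : ℝ) * c^2 := by
          rw [← Finset.sum_filter, Finset.sum_const, nsmul_eq_mul]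
      _ ≤ (2^(m-(i-1)) : ℝ) * c^2 := by
          apply mul_le_mul_of_nonneg_right _ (sq_nonneg c)
          exact_mod_cast hcard
      _ = (2:ℝ)^(i+1) / 2^m := by
          rw [hc, div_pow, ← mul_div_assoc,
            div_eq_div_iff (by positivity) (by positivity),
            ← pow_mul, ← pow_mul, ← pow_add, ← pow_add, ← pow_add]
          congr 1
          omega
  have hsum : (∑ i ∈ Finset.Icc 1 t1, ∑ e ∈ cccMatching m i,
      ((matProd (fun j => balMatrix (cccMatching m j)) (i+1) m) e.1 w -
       (matProd (fun j => balMatrix (cccMatching m j)) (i+1) m) e.2 w) ^ 2)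
      ≤ (2:ℝ)^(t1+2) / 2^m := by
    calc _ ≤ ∑ i ∈ Finset.Icc 1 t1, (2:ℝ)^(i+1) / 2^m := Finset.sum_le_sum inner
      _ = (∑ i ∈ Finset.Icc 1 t1, (2:ℝ)^(i+1)) / 2^m := by rw [Finset.sum_div]
      _ ≤ (2:ℝ)^(t1+2) / 2^m := by
          gcongr
          exact_mod_cast sum_pow_le t1
  have hnat : m * 2^(t1+2) ≤ 8 * 2^m := by
    have h1 : m ≤ 2 * 2^(Nat.log 2 m) := by
      have := Nat.lt_pow_succ_log_self (by norm_num : 1 < 2) m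
      rw [pow_succ] at this
      omega
    have h2 : (2:ℕ)^(Nat.log 2 m) * 2^t1 = 2^m := by
      rw [← pow_add]; congr 1; omega
    calc m * 2^(t1+2) = m * 2^t1 * 4 := by rw [pow_add]; ring
      _ ≤ (2 * 2^(Nat.log 2 m)) * 2^t1 * 4 :=
          Nat.mul_le_mul_right _ (Nat.mul_le_mul_right _ h1)
      _ = 8 * 2^m := by rw [← h2]; ring
  have hfin : (m:ℝ) * ((2:ℝ)^(t1+2) / 2^m) ≤ 8 := by
    rw [mul_div_assoc', div_le_iff₀ h2m]
    calc (m:ℝ) * 2^(t1+2) = ((m * 2^(t1+2) : ℕ) : ℝ) := by push_cast; ring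
      _ ≤ ((8 * 2^m : ℕ) : ℝ) := by exact_mod_cast hnat
      _ = 8 * 2^m := by push_cast; ring
  calc (m:ℝ) * ∑ i ∈ Finset.Icc 1 t1, ∑ e ∈ cccMatching m i,
        ((matProd (fun j => balMatrix (cccMatching m j)) (i+1) m) e.1 w -
         (matProd (fun j => balMatrix (cccMatching m j)) (i+1) m) e.2 w) ^ 2
      ≤ (m:ℝ) * ((2:ℝ)^(t1+2) / 2^m) :=
        mul_le_mul_of_nonneg_left hsum (by positivity)
    _ ≤ 8 := hfin
    _ ≤ 32 := by norm_num
end
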